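/- arXiv:0907.0108 — 4 statements merged into one kernel-verified Lean document; each statement's English description precedes it below -/
import Mathlib

section
/- Let H be a self-adjoint operator on ℋ with pairwise distinct eigenvalues E₁,…,E_D and orthonormal eigenbasis φ₁,…,φ_D, let ψ₀ ∈ ℋ with ‖ψ₀‖ = 1, and set c_α := ⟨φ_α, ψ₀⟩. Then for all vectors χ, χ' ∈ ℋ, the time average lim_{T→∞} (1/T)·∫₀^T ⟨χ, ψ_t⟩·conj(⟨χ', ψ_t⟩) dt exists and equals Σ_{α=1}^D |c_α|²·⟨χ, φ_α⟩·conj(⟨χ', φ_α⟩); that is, the time average of the rank-one operator |ψ_t⟩⟨ψ_t| is Σ_α |c_α|²·|φ_α⟩⟨φ_α|. -/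
open MeasureTheory Filter

noncomputable section

section aux

variable {F : Type*} [NormedAddCommGroup F] [NormedSpace ℂ F] [CompleteSpace F]

lemma exp_apply_eigen (A : F →L[ℂ] F) (μ : ℂ) (x : F) (hx : A x = μ • x) :
    NormedSpace.exp A x = Complex.exp μ • x := by
  have hpow : ∀ n : ℕ, (A ^ n) x = μ ^ n • x := by
    intro n
    induction n with
    | zero => simp
    | succ n ih =>
      rw [pow_succ, ContinuousLinearMap.mul_apply, hx, _root_.map_smul, ih, smul_smul,
        pow_succ, mul_comm]
  have hsum : Summable fun n : ℕ => ((n.factorial : ℂ))⁻¹ • A ^ n :=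
    NormedSpace.expSeries_summable' A
  have h1 : NormedSpace.exp A x = ∑' n : ℕ, (((n.factorial : ℂ))⁻¹ • A ^ n) x := by
    rw [NormedSpace.exp_eq_tsum ℂ]
    exact (ContinuousLinearMap.apply ℂ F x).map_tsum hsum
  rw [h1]
  have h2 : ∀ n : ℕ, (((n.factorial : ℂ))⁻¹ • A ^ n) x
      = (((n.factorial : ℂ))⁻¹ * μ ^ n) • x := by
    intro n
    rw [ContinuousLinearMap.smul_apply, hpow, smul_smul]
  simp_rw [h2]
  rw [Summable.tsum_smul_const]
  · congr 1
    rw [Complex.exp_eq_exp_ℂ, NormedSpace.exp_eq_tsum ℂ]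
    simp [smul_eq_mul]
  · simpa [smul_eq_mul] using NormedSpace.expSeries_summable' (𝕂 := ℂ) μ

/-- time average of `exp (iω t)` tends to 0 for `ω ≠ 0`. -/
lemma avg_exp_tendsto_zero {ω : ℝ} (hω : ω ≠ 0) :
    Tendsto (fun T : ℝ => (T : ℂ)⁻¹ * ∫ t in (0:ℝ)..T, Complex.exp ((ω : ℂ) * Complex.I * t))
      atTop (nhds 0) := by
  have hc : (ω : ℂ) * Complex.I ≠ 0 := by
    simp [Complex.ext_iff, hω]
  apply squeeze_zero_norm' (a := fun T : ℝ => T⁻¹ * (2 / ‖(ω : ℂ) * Complex.I‖))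
  · filter_upwards [eventually_ge_atTop (1:ℝ)] with T hT
    rw [integral_exp_mul_complex hc]
    have h1 : ∀ s : ℝ, ‖Complex.exp ((ω:ℂ) * Complex.I * s)‖ = 1 := by
      intro s
      rw [Complex.norm_exp]
      simp [mul_comm, mul_assoc]
    rw [norm_mul, norm_inv, norm_div, Complex.norm_real, Real.norm_eq_abs,
      abs_of_pos (show (0:ℝ) < T by linarith)]
    gcongr
    exact (norm_sub_le _ _).trans (by rw [h1, h1]; norm_num)
  · have h0 : Tendsto (fun T : ℝ => T⁻¹) atTop (nhds 0) := tendsto_inv_atTop_zero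
    simpa using h0.mul_const (2 / ‖(ω : ℂ) * Complex.I‖)

end aux

/-- Time evolution `ψ_t = exp(−iHt)ψ₀` for a (continuous linear) operator `H`. -/
def timeEvolved (D : ℕ) (H : EuclideanSpace ℂ (Fin D) →L[ℂ] EuclideanSpace ℂ (Fin D))
    (ψ₀ : EuclideanSpace ℂ (Fin D)) (t : ℝ) : EuclideanSpace ℂ (Fin D) :=
  NormedSpace.exp ((-(t : ℂ) * Complex.I) • H) ψ₀

set_option maxHeartbeats 1000000 in
/-- for a non-degenerate self-adjoint `H` with orthonormal eigenbasis `φ`,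
the time average of `⟨χ, ψ_t⟩ · conj ⟨χ', ψ_t⟩` exists and equals
`Σ_α |c_α|² ⟨χ, φ_α⟩ conj ⟨χ', φ_α⟩`; i.e. the time average of `|ψ_t⟩⟨ψ_t|` is
`Σ_α |c_α|² |φ_α⟩⟨φ_α|`. -/
theorem time_average_rank_one (D : ℕ) (hD : 1 ≤ D)
    (H : EuclideanSpace ℂ (Fin D) →L[ℂ] EuclideanSpace ℂ (Fin D))
    (hH : IsSelfAdjoint H)
    (E : Fin D → ℝ) (hE : Function.Injective E)
    (φ : OrthonormalBasis (Fin D) ℂ (EuclideanSpace ℂ (Fin D)))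
    (hEigen : ∀ α, H (φ α) = (E α : ℂ) • φ α)
    (ψ₀ : EuclideanSpace ℂ (Fin D)) (hψ₀ : ‖ψ₀‖ = 1)
    (c : Fin D → ℂ) (hc : ∀ α, c α = inner ℂ (φ α) ψ₀)
    (χ χ' : EuclideanSpace ℂ (Fin D)) :
    Tendsto
      (fun T : ℝ => (T : ℂ)⁻¹ *
        ∫ t in (0:ℝ)..T,
          (inner ℂ χ (timeEvolved D H ψ₀ t) : ℂ) *
            (starRingEnd ℂ) (inner ℂ χ' (timeEvolved D H ψ₀ t) : ℂ))
      atTop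
      (nhds (∑ α : Fin D, (‖c α‖ ^ 2 : ℂ) *
        (inner ℂ χ (φ α) : ℂ) * (starRingEnd ℂ) (inner ℂ χ' (φ α) : ℂ))) := by
  classical
  set K : Fin D → Fin D → ℂ :=
    fun α β => (c α * inner ℂ χ (φ α)) * (starRingEnd ℂ) (c β * inner ℂ χ' (φ β)) with hK
  -- decomposition of ψ₀
  have hψ0 : ψ₀ = ∑ α, c α • φ α := by
    conv_lhs => rw [← φ.sum_repr ψ₀]
    refine Finset.sum_congr rfl fun α _ => ?_
    rw [hc, φ.repr_apply_apply]
  -- time evolution formula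
  have hψt : ∀ t : ℝ, timeEvolved D H ψ₀ t
      = ∑ α, (Complex.exp (-(t:ℂ) * Complex.I * (E α)) * c α) • φ α := by
    intro t
    rw [timeEvolved, hψ0, map_sum]
    refine Finset.sum_congr rfl fun α _ => ?_
    have hA : ((-(t:ℂ) * Complex.I) • H) (φ α) = (-(t:ℂ) * Complex.I * (E α)) • φ α := by
      rw [ContinuousLinearMap.smul_apply, hEigen, smul_smul]
    rw [_root_.map_smul, exp_apply_eigen _ (-(t:ℂ) * Complex.I * (E α)) _ hA, smul_smul,
      mul_comm]
  -- inner product formula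
  have hin : ∀ (v : EuclideanSpace ℂ (Fin D)) (t : ℝ),
      (inner ℂ v (timeEvolved D H ψ₀ t) : ℂ)
        = ∑ α, Complex.exp (-(t:ℂ) * Complex.I * (E α)) * (c α * inner ℂ v (φ α)) := by
    intro v t
    rw [hψt, inner_sum]
    refine Finset.sum_congr rfl fun α _ => ?_
    rw [inner_smul_right]; ring
  -- integrand expansion
  have hexpand : ∀ t : ℝ,
      (inner ℂ χ (timeEvolved D H ψ₀ t) : ℂ) *
          (starRingEnd ℂ) (inner ℂ χ' (timeEvolved D H ψ₀ t) : ℂ)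
        = ∑ α, ∑ β, Complex.exp (((E β - E α : ℝ) : ℂ) * Complex.I * t) * K α β := by
    intro t
    rw [hin, hin, map_sum, Finset.sum_mul_sum]
    refine Finset.sum_congr rfl fun α _ => Finset.sum_congr rfl fun β _ => ?_
    rw [map_mul]
    have hconjexp : (starRingEnd ℂ) (Complex.exp (-(t:ℂ) * Complex.I * (E β)))
        = Complex.exp ((t:ℂ) * Complex.I * (E β)) := by
      rw [← Complex.exp_conj]
      congr 1
      simp only [map_mul, map_neg, Complex.conj_ofReal, Complex.conj_I]
      ring
    rw [hconjexp, hK]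
    have : Complex.exp (-(t:ℂ) * Complex.I * (E α)) * Complex.exp ((t:ℂ) * Complex.I * (E β))
        = Complex.exp (((E β - E α : ℝ) : ℂ) * Complex.I * t) := by
      rw [← Complex.exp_add]
      congr 1
      push_cast
      ring
    calc Complex.exp (-(t:ℂ) * Complex.I * (E α)) * (c α * inner ℂ χ (φ α)) *
          (Complex.exp ((t:ℂ) * Complex.I * (E β)) * (starRingEnd ℂ) (c β * inner ℂ χ' (φ β)))
        = (Complex.exp (-(t:ℂ) * Complex.I * (E α)) * Complex.exp ((t:ℂ) * Complex.I * (E β))) *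
          ((c α * inner ℂ χ (φ α)) * (starRingEnd ℂ) (c β * inner ℂ χ' (φ β))) := by ring
      _ = _ := by rw [this]
  -- integrability of each term
  have hcont : ∀ (ω : ℝ) (k : ℂ), Continuous fun t : ℝ =>
      Complex.exp ((ω : ℂ) * Complex.I * t) * k := by
    intro ω k
    exact (Complex.continuous_exp.comp (continuous_const.mul Complex.continuous_ofReal)).mul
      continuous_const
  -- rewrite the time average as a finite sum
  have hsum : ∀ T : ℝ, (T : ℂ)⁻¹ *
      ∫ t in (0:ℝ)..T,
        (inner ℂ χ (timeEvolved D H ψ₀ t) : ℂ) *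
          (starRingEnd ℂ) (inner ℂ χ' (timeEvolved D H ψ₀ t) : ℂ)
      = ∑ α, ∑ β, (T : ℂ)⁻¹ *
          ∫ t in (0:ℝ)..T, Complex.exp (((E β - E α : ℝ) : ℂ) * Complex.I * t) * K α β := by
    intro T
    rw [intervalIntegral.integral_congr (g := fun t =>
      ∑ α, ∑ β, Complex.exp (((E β - E α : ℝ) : ℂ) * Complex.I * t) * K α β)
      (fun t _ => hexpand t)]
    rw [intervalIntegral.integral_finset_sum (fun α (_ : α ∈ Finset.univ) =>
      Continuous.intervalIntegrable
        (continuous_finset_sum Finset.univ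
          (fun β _ => hcont (E β - E α) (K α β))) _ _)]
    rw [Finset.mul_sum]
    refine Finset.sum_congr rfl fun α _ => ?_
    rw [intervalIntegral.integral_finset_sum (fun β (_ : β ∈ Finset.univ) =>
      ((hcont _ _).intervalIntegrable _ _)), Finset.mul_sum]
  simp only [funext hsum]
  -- limit of each term
  have hterm : ∀ α β : Fin D, Tendsto (fun T : ℝ => (T : ℂ)⁻¹ *
      ∫ t in (0:ℝ)..T, Complex.exp (((E β - E α : ℝ) : ℂ) * Complex.I * t) * K α β)
      atTop (nhds (if α = β then K α β else 0)) := by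
    intro α β
    by_cases h : α = β
    · subst h
      simp only [if_pos rfl]
      have heq : ∀ᶠ T : ℝ in atTop, (T : ℂ)⁻¹ *
          (∫ t in (0:ℝ)..T, Complex.exp (((E α - E α : ℝ) : ℂ) * Complex.I * t) * K α α)
          = K α α := by
        filter_upwards [eventually_ge_atTop (1:ℝ)] with T hT
        have : (fun t : ℝ => Complex.exp (((E α - E α : ℝ) : ℂ) * Complex.I * t) * K α α)
            = fun _ : ℝ => K α α := by
          funext t; simp
        rw [this, intervalIntegral.integral_const, sub_zero, Complex.real_smul,
          ← mul_assoc, inv_mul_cancel₀ (Complex.ofReal_ne_zero.mpr (by linarith)), one_mul]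
      exact Tendsto.congr' (Filter.EventuallyEq.symm heq) tendsto_const_nhds
    · simp only [if_neg h]
      have hω : E β - E α ≠ 0 := sub_ne_zero.mpr fun hEq => h (hE hEq).symm
      have := (avg_exp_tendsto_zero hω).mul_const (K α β)
      rw [zero_mul] at this
      refine this.congr fun T => ?_
      rw [mul_assoc, intervalIntegral.integral_mul_const]
  have hlim := tendsto_finset_sum Finset.univ fun α (_ : α ∈ Finset.univ) =>
    tendsto_finset_sum Finset.univ fun β (_ : β ∈ Finset.univ) => hterm α β
  convert hlim using 2
  have hcc : ∀ α : Fin D, c α * (starRingEnd ℂ) (c α) = (‖c α‖ : ℂ) ^ 2 := by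
    intro α
    rw [Complex.mul_conj]
    norm_cast
    simp [Complex.normSq_eq_norm_sq]
  trans (∑ α : Fin D, K α α)
  · refine Finset.sum_congr rfl fun α _ => ?_
    simp only [hK]
    rw [map_mul, ← hcc α]
    ring
  · refine Finset.sum_congr rfl fun α _ => ?_
    simp

end
end

section
/- Let H be self-adjoint on ℋ, 𝒟 = {ℋ_ν} an orthogonal decomposition, ψ₀ a unit vector, and ε, δ' > 0. If for every ν, limsup_{T→∞} (1/T)·∫₀^T (‖P_ν ψ_t‖² − d_ν/D)² dt < ε²·(d_ν/(N·D))·(δ'/N), then the system (H, 𝒟, ψ₀) is ε-δ'-normal in von Neumann's sense. -/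
open MeasureTheory Filter

noncomputable section

/-- `p t` holds for `(1−δ')`-most times `t` in the long run. -/
def mostTimes (δ' : ℝ) (p : ℝ → Prop) : Prop :=
  1 - δ' ≤ liminf (fun T : ℝ =>
    (volume {t : ℝ | t ∈ Set.Ioo 0 T ∧ p t}).toReal / T) atTop

/-- The system `(H, 𝒟, ψ₀)` is `ε`-`δ'`-normal in von Neumann's sense. -/
def normalVN (D N : ℕ) (H : EuclideanSpace ℂ (Fin D) →L[ℂ] EuclideanSpace ℂ (Fin D))
    (V : Fin N → Submodule ℂ (EuclideanSpace ℂ (Fin D))) (dv : Fin N → ℕ)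
    (ψ₀ : EuclideanSpace ℂ (Fin D)) (ε δ' : ℝ) : Prop :=
  mostTimes δ' (fun t => ∀ ν : Fin N,
    |‖((V ν).orthogonalProjectionOnto (timeEvolved D H ψ₀ t) : EuclideanSpace ℂ (Fin D))‖ ^ 2
        - (dv ν : ℝ) / D|
      < ε * Real.sqrt ((dv ν : ℝ) / (N * D)))

/-- The system `(H, 𝒟, ψ₀)` is `ε`-`δ'`-normal in the strong sense. -/
def normalStrong (D N : ℕ) (H : EuclideanSpace ℂ (Fin D) →L[ℂ] EuclideanSpace ℂ (Fin D))
    (V : Fin N → Submodule ℂ (EuclideanSpace ℂ (Fin D))) (dv : Fin N → ℕ)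
    (ψ₀ : EuclideanSpace ℂ (Fin D)) (ε δ' : ℝ) : Prop :=
  mostTimes δ' (fun t => ∀ ν : Fin N,
    |‖((V ν).orthogonalProjectionOnto (timeEvolved D H ψ₀ t) : EuclideanSpace ℂ (Fin D))‖ ^ 2
        - (dv ν : ℝ) / D|
      < ε * ((dv ν : ℝ) / D))

set_option maxHeartbeats 1000000
lemma avg_le_four (g : ℝ → ℝ) (hbd : ∀ t, |g t| ≤ 2) (T : ℝ) :
    (1/T) * ∫ t in (0:ℝ)..T, (g t)^2 ≤ 4 := by
  rcases eq_or_ne T 0 with rfl | hT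
  · simp
  · have h1 : ‖∫ t in (0:ℝ)..T, (g t)^2‖ ≤ 4 * |T - 0| := by
      apply intervalIntegral.norm_integral_le_of_norm_le_const
      intro t _
      have := hbd t
      rw [Real.norm_eq_abs, abs_of_nonneg (sq_nonneg _)]
      nlinarith [abs_nonneg (g t), sq_abs (g t)]
    rw [Real.norm_eq_abs, sub_zero] at h1
    have hTpos : 0 < |T| := abs_pos.mpr hT
    calc (1/T) * ∫ t in (0:ℝ)..T, (g t)^2
        ≤ |(1/T) * ∫ t in (0:ℝ)..T, (g t)^2| := le_abs_self _
      _ = (1/|T|) * |∫ t in (0:ℝ)..T, (g t)^2| := by rw [abs_mul, abs_div, abs_one]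
      _ ≤ (1/|T|) * (4 * |T|) := by gcongr
      _ = 4 := by field_simp

lemma avg_nonneg (g : ℝ → ℝ) {T : ℝ} (hT : 0 < T) :
    0 ≤ (1/T) * ∫ t in (0:ℝ)..T, (g t)^2 :=
  mul_nonneg (by positivity) (intervalIntegral.integral_nonneg hT.le fun t _ => sq_nonneg _)


lemma normality_aux {N : ℕ} (g : Fin N → ℝ → ℝ) (hcont : ∀ ν, Continuous (g ν))
    (hbd : ∀ ν t, |g ν t| ≤ 2) (c : Fin N → ℝ) (hc : ∀ ν, 0 < c ν)
    (δ' : ℝ) (hδ' : 0 < δ')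
    (hG : ∀ ν, limsup (fun T : ℝ => (1/T) * ∫ t in (0:ℝ)..T, (g ν t)^2) atTop
      < (c ν)^2 * (δ'/N)) :
    1 - δ' ≤ liminf (fun T : ℝ =>
      (volume {t : ℝ | t ∈ Set.Ioo 0 T ∧ ∀ ν, |g ν t| < c ν}).toReal / T) atTop := by
  have hratio_le : ∀ T : ℝ,
      (volume {t : ℝ | t ∈ Set.Ioo 0 T ∧ ∀ ν, |g ν t| < c ν}).toReal / T ≤ 1 := by
    intro T
    rcases le_or_gt T 0 with hT | hT
    · have hsub : {t : ℝ | t ∈ Set.Ioo 0 T ∧ ∀ ν, |g ν t| < c ν} ⊆ (∅ : Set ℝ) := by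
        intro t ht
        exact absurd (ht.1.1.trans ht.1.2) (not_lt.mpr hT)
      have : volume {t : ℝ | t ∈ Set.Ioo 0 T ∧ ∀ ν, |g ν t| < c ν} = 0 :=
        measure_mono_null hsub measure_empty
      rw [this]
      simp
    · rw [div_le_one hT]
      have hle : volume {t : ℝ | t ∈ Set.Ioo 0 T ∧ ∀ ν, |g ν t| < c ν}
          ≤ volume (Set.Ioo (0:ℝ) T) := measure_mono fun t ht => ht.1
      rw [Real.volume_Ioo, sub_zero] at hle
      calc (volume {t : ℝ | t ∈ Set.Ioo 0 T ∧ ∀ ν, |g ν t| < c ν}).toReal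
          ≤ (ENNReal.ofReal T).toReal := ENNReal.toReal_mono ENNReal.ofReal_ne_top hle
        _ = T := ENNReal.toReal_ofReal hT.le
  refine le_liminf_of_le (IsBoundedUnder.isCoboundedUnder_ge (isBoundedUnder_of ⟨1, hratio_le⟩)) ?_
  have hev : ∀ᶠ T in atTop, ∀ ν, (1/T) * ∫ t in (0:ℝ)..T, (g ν t)^2 < (c ν)^2 * (δ'/N) :=
    eventually_all.mpr fun ν => eventually_lt_of_limsup_lt (hG ν)
      (isBoundedUnder_of ⟨4, avg_le_four (g ν) (hbd ν)⟩)
  filter_upwards [hev, eventually_gt_atTop 0] with T hT hT0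
  have key : ∀ ν, (volume {t : ℝ | t ∈ Set.Ioo 0 T ∧ c ν ≤ |g ν t|}).toReal ≤ T * (δ'/N) := by
    intro ν
    have hc2 : 0 < (c ν)^2 := pow_pos (hc ν) 2
    have hInt : IntegrableOn (fun t => (g ν t)^2) (Set.Ioo 0 T) volume :=
      ((hcont ν).pow 2).integrableOn_Icc.mono_set Set.Ioo_subset_Icc_self
    have hmeas : MeasurableSet {t : ℝ | (c ν)^2 ≤ (g ν t)^2} :=
      (isClosed_le continuous_const ((hcont ν).pow 2)).measurableSet
    have markov := mul_meas_ge_le_integral_of_nonneg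
      (μ := volume.restrict (Set.Ioo 0 T))
      (ae_of_all _ fun t => sq_nonneg (g ν t)) hInt ((c ν)^2)
    rw [measureReal_def, Measure.restrict_apply hmeas] at markov
    have hsetEq : {t : ℝ | (c ν)^2 ≤ (g ν t)^2} ∩ Set.Ioo 0 T
        = {t : ℝ | t ∈ Set.Ioo 0 T ∧ c ν ≤ |g ν t|} := by
      ext t
      simp only [Set.mem_inter_iff, Set.mem_setOf_eq]
      constructor
      · rintro ⟨h1, h2⟩
        exact ⟨h2, by nlinarith [abs_nonneg (g ν t), sq_abs (g ν t), (hc ν).le]⟩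
      · rintro ⟨h1, h2⟩
        exact ⟨by nlinarith [sq_abs (g ν t), (hc ν).le], h1⟩
    rw [hsetEq] at markov
    have hIeq : ∫ t in Set.Ioo 0 T, (g ν t)^2 = ∫ t in (0:ℝ)..T, (g ν t)^2 := by
      rw [intervalIntegral.integral_of_le hT0.le, MeasureTheory.integral_Ioc_eq_integral_Ioo]
    have hI : ∫ t in Set.Ioo 0 T, (g ν t)^2 < T * ((c ν)^2 * (δ'/N)) := by
      rw [hIeq]
      have h := hT ν
      have : ∫ t in (0:ℝ)..T, (g ν t)^2 = T * ((1/T) * ∫ t in (0:ℝ)..T, (g ν t)^2) := by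
        field_simp
      rw [this]
      exact (mul_lt_mul_iff_right₀ hT0).mpr h
    have hfinal : (c ν)^2 * (volume {t : ℝ | t ∈ Set.Ioo 0 T ∧ c ν ≤ |g ν t|}).toReal
        < (c ν)^2 * (T * (δ'/N)) := markov.trans_lt (hI.trans_eq (by ring))
    exact ((mul_lt_mul_iff_right₀ hc2).mp hfinal).le
  set B : Fin N → Set ℝ := fun ν => {t : ℝ | t ∈ Set.Ioo 0 T ∧ c ν ≤ |g ν t|} with hB
  set G : Set ℝ := {t : ℝ | t ∈ Set.Ioo 0 T ∧ ∀ ν, |g ν t| < c ν} with hGdef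
  have hcover : Set.Ioo (0:ℝ) T ⊆ G ∪ ⋃ ν, B ν := by
    intro t ht
    by_cases h : ∀ ν, |g ν t| < c ν
    · exact Or.inl ⟨ht, h⟩
    · push_neg at h
      obtain ⟨ν, hν⟩ := h
      exact Or.inr (Set.mem_iUnion.mpr ⟨ν, ht, hν⟩)
  have hfin : ∀ (s : Set ℝ), s ⊆ Set.Ioo 0 T → volume s ≠ ⊤ := fun s hs =>
    ((measure_mono hs).trans_lt measure_Ioo_lt_top).ne
  have h1 : volume (Set.Ioo (0:ℝ) T) ≤ volume G + ∑ ν, volume (B ν) :=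
    (measure_mono hcover).trans ((measure_union_le _ _).trans
      (add_le_add le_rfl (measure_iUnion_fintype_le _ _)))
  have hGfin : volume G ≠ ⊤ := hfin G fun t ht => ht.1
  have hBfin : ∀ ν, volume (B ν) ≠ ⊤ := fun ν => hfin (B ν) fun t ht => ht.1
  have hsumfin : ∑ ν, volume (B ν) ≠ ⊤ := by
    rw [← lt_top_iff_ne_top]
    exact ENNReal.sum_lt_top.mpr fun ν _ => lt_top_iff_ne_top.mpr (hBfin ν)
  have h2 : T ≤ (volume G).toReal + ∑ ν, (volume (B ν)).toReal := by
    have h3 := ENNReal.toReal_mono (by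
      rw [← lt_top_iff_ne_top, ENNReal.add_lt_top]
      exact ⟨lt_top_iff_ne_top.mpr hGfin, lt_top_iff_ne_top.mpr hsumfin⟩) h1
    rwa [Real.volume_Ioo, sub_zero, ENNReal.toReal_ofReal hT0.le,
      ENNReal.toReal_add hGfin hsumfin, ENNReal.toReal_sum (fun ν _ => hBfin ν)] at h3
  have h3 : ∑ ν, (volume (B ν)).toReal ≤ T * δ' := by
    calc ∑ ν, (volume (B ν)).toReal ≤ ∑ _ν : Fin N, T * (δ'/N) :=
          Finset.sum_le_sum fun ν _ => key ν
      _ ≤ T * δ' := by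
          rw [Finset.sum_const, Finset.card_univ, Fintype.card_fin, nsmul_eq_mul]
          rcases Nat.eq_zero_or_pos N with h | h
          · subst h; simp; positivity
          · have hN : (N:ℝ) ≠ 0 := Nat.cast_ne_zero.mpr h.ne'
            field_simp
            exact le_rfl
  rw [le_div_iff₀ hT0]
  nlinarith [h2, h3]

lemma timeEvolved_continuous (D : ℕ) (H : EuclideanSpace ℂ (Fin D) →L[ℂ] EuclideanSpace ℂ (Fin D))
    (ψ₀ : EuclideanSpace ℂ (Fin D)) : Continuous (timeEvolved D H ψ₀) := by
  letI : NormedAlgebra ℚ (EuclideanSpace ℂ (Fin D) →L[ℂ] EuclideanSpace ℂ (Fin D)) :=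
    .restrictScalars ℚ ℂ _
  have h1 : Continuous fun t : ℝ => NormedSpace.exp ((-(t:ℂ) * Complex.I) • H) :=
    NormedSpace.exp_continuous.comp (by continuity)
  exact isBoundedBilinearMap_apply.continuous.comp (h1.prodMk continuous_const)

lemma timeEvolved_norm (D : ℕ) (H : EuclideanSpace ℂ (Fin D) →L[ℂ] EuclideanSpace ℂ (Fin D))
    (hH : IsSelfAdjoint H) (ψ₀ : EuclideanSpace ℂ (Fin D)) (t : ℝ) :
    ‖timeEvolved D H ψ₀ t‖ = ‖ψ₀‖ := by
  letI : NormedAlgebra ℚ (EuclideanSpace ℂ (Fin D) →L[ℂ] EuclideanSpace ℂ (Fin D)) :=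
    .restrictScalars ℚ ℂ _
  have hmem : (-(t:ℂ) * Complex.I) • H ∈
      skewAdjoint (EuclideanSpace ℂ (Fin D) →L[ℂ] EuclideanSpace ℂ (Fin D)) := by
    rw [skewAdjoint.mem_iff, star_smul, hH.star_eq]
    have : -((-(t:ℂ) * Complex.I) • H) = (-(-(t:ℂ) * Complex.I)) • H := (neg_smul _ _).symm
    rw [this]
    congr 1
    simp [Complex.ext_iff]
  exact ContinuousLinearMap.norm_map_of_mem_unitary
    (NormedSpace.exp_mem_unitary_of_mem_skewAdjoint hmem) ψ₀

/-- if for every `ν` the time average of `(‖P_ν ψ_t‖² − d_ν/D)²` is (in the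
`limsup` sense) below `ε²·(d_ν/(N·D))·(δ'/N)`, then the system is `ε`-`δ'`-normal in
von Neumann's sense. -/
theorem normality_criterion_vN (D N : ℕ) (hD : 1 ≤ D)
    (H : EuclideanSpace ℂ (Fin D) →L[ℂ] EuclideanSpace ℂ (Fin D)) (hH : IsSelfAdjoint H)
    (V : Fin N → Submodule ℂ (EuclideanSpace ℂ (Fin D)))
    (horth : ∀ ν ν', ν ≠ ν' → Submodule.IsOrtho (V ν) (V ν'))
    (hspan : (⨆ ν, V ν) = ⊤)
    (dv : Fin N → ℕ) (hdim : ∀ ν, Module.finrank ℂ (V ν) = dv ν)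
    (hsum : ∑ ν, dv ν = D)
    (ψ₀ : EuclideanSpace ℂ (Fin D)) (hψ₀ : ‖ψ₀‖ = 1)
    (ε δ' : ℝ) (hε : 0 < ε) (hδ' : 0 < δ')
    (hG : ∀ ν : Fin N,
      limsup (fun T : ℝ => (1 / T) *
          ∫ t in (0:ℝ)..T,
            (‖((V ν).orthogonalProjectionOnto (timeEvolved D H ψ₀ t) :
                EuclideanSpace ℂ (Fin D))‖ ^ 2 - (dv ν : ℝ) / D) ^ 2) atTop
        < ε ^ 2 * ((dv ν : ℝ) / (N * D)) * (δ' / N)) :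
    normalVN D N H V dv ψ₀ ε δ' := by
  have hDpos : (0:ℝ) < D := by exact_mod_cast hD
  set g : Fin N → ℝ → ℝ := fun ν t =>
    ‖((V ν).orthogonalProjectionOnto (timeEvolved D H ψ₀ t) :
        EuclideanSpace ℂ (Fin D))‖ ^ 2 - (dv ν : ℝ) / D with hgdef
  have hcont : ∀ ν, Continuous (g ν) := by
    intro ν
    apply Continuous.sub ?_ continuous_const
    exact (continuous_subtype_val.comp (((V ν).orthogonalProjectionOnto).continuous.comp
      (timeEvolved_continuous D H ψ₀))).norm.pow 2
  have hdle : ∀ ν, (dv ν : ℝ) ≤ D := by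
    intro ν
    exact_mod_cast (Finset.single_le_sum (f := fun ν => dv ν) (fun i _ => Nat.zero_le _)
      (Finset.mem_univ ν)).trans hsum.le
  have hproj : ∀ ν t, ‖((V ν).orthogonalProjectionOnto (timeEvolved D H ψ₀ t) :
      EuclideanSpace ℂ (Fin D))‖ ≤ 1 := by
    intro ν t
    calc ‖((V ν).orthogonalProjectionOnto (timeEvolved D H ψ₀ t) : EuclideanSpace ℂ (Fin D))‖
        = ‖(V ν).orthogonalProjectionOnto (timeEvolved D H ψ₀ t)‖ := rfl
      _ ≤ ‖(V ν).orthogonalProjectionOnto‖ * ‖timeEvolved D H ψ₀ t‖ :=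
          ((V ν).orthogonalProjectionOnto).le_opNorm _
      _ ≤ 1 * 1 := by
          apply mul_le_mul (Submodule.orthogonalProjectionOnto_norm_le _) ?_ (norm_nonneg _) zero_le_one
          rw [timeEvolved_norm D H hH ψ₀ t, hψ₀]
      _ = 1 := one_mul 1
  have hbd : ∀ ν t, |g ν t| ≤ 2 := by
    intro ν t
    have h1 := hproj ν t
    have h2 : (0:ℝ) ≤ (dv ν : ℝ) / D := by positivity
    have h3 : (dv ν : ℝ) / D ≤ 1 := by
      rw [div_le_one hDpos]; exact hdle ν
    have h4 : (0:ℝ) ≤ ‖((V ν).orthogonalProjectionOnto (timeEvolved D H ψ₀ t) :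
        EuclideanSpace ℂ (Fin D))‖ := norm_nonneg _
    rw [hgdef, abs_le]
    constructor <;> [nlinarith; nlinarith]
  -- positivity of dimensions
  have hdpos : ∀ ν : Fin N, 0 < (dv ν : ℝ) := by
    intro ν
    by_contra hcon
    push_neg at hcon
    have hzero : (dv ν : ℝ) = 0 := le_antisymm hcon (by positivity)
    have hRHS : ε ^ 2 * ((dv ν : ℝ) / (N * D)) * (δ' / N) = 0 := by
      rw [hzero]; ring
    have hGν := hG ν
    rw [hRHS] at hGν
    have hbdd : IsBoundedUnder (· ≤ ·) atTop (fun T : ℝ => (1 / T) *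
        ∫ t in (0:ℝ)..T, (g ν t) ^ 2) := isBoundedUnder_of ⟨4, avg_le_four (g ν) (hbd ν)⟩
    have hfreq : ∃ᶠ T : ℝ in atTop, (0:ℝ) ≤ (1 / T) * ∫ t in (0:ℝ)..T, (g ν t) ^ 2 :=
      ((eventually_gt_atTop (0:ℝ)).mono fun T hT => avg_nonneg (g ν) hT).frequently
    have : (0:ℝ) ≤ limsup (fun T : ℝ => (1 / T) *
        ∫ t in (0:ℝ)..T, (g ν t) ^ 2) atTop := le_limsup_of_frequently_le hfreq hbdd
    exact absurd (this.trans_lt hGν) (lt_irrefl 0)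
  have hc : ∀ ν : Fin N, 0 < ε * Real.sqrt ((dv ν : ℝ) / (N * D)) := by
    intro ν
    have hN : 0 < N := ν.pos
    have hNpos : (0:ℝ) < N := by exact_mod_cast hN
    have hx : (0:ℝ) < (dv ν : ℝ) / (N * D) := by
      apply div_pos (hdpos ν) (by positivity)
    positivity
  have hG' : ∀ ν : Fin N,
      limsup (fun T : ℝ => (1 / T) * ∫ t in (0:ℝ)..T, (g ν t) ^ 2) atTop
        < (ε * Real.sqrt ((dv ν : ℝ) / (N * D))) ^ 2 * (δ' / N) := by
    intro ν
    have hx : (0:ℝ) ≤ (dv ν : ℝ) / (N * D) := by positivity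
    have heq : (ε * Real.sqrt ((dv ν : ℝ) / (N * D))) ^ 2 * (δ' / N)
        = ε ^ 2 * ((dv ν : ℝ) / (N * D)) * (δ' / N) := by
      rw [mul_pow, Real.sq_sqrt hx]
    rw [heq]
    exact hG ν
  exact normality_aux g hcont hbd (fun ν => ε * Real.sqrt ((dv ν : ℝ) / (N * D))) hc δ' hδ' hG'
end
end

section
/- Let 𝒟 = {ℋ_ν} be an orthogonal decomposition of ℋ, let ψ ∈ ℋ with ‖ψ‖ = 1, and let ε > 0. Suppose |‖P_ν ψ‖² − d_ν/D| < ε·√(d_ν/(N·D)) for all ν. Then for every real-linear combination A = Σ_ν α_ν P_ν with real coefficients α_ν not all zero, |⟨ψ, Aψ⟩ − tr(A)/D| < ε·√(tr(A²)/D), where tr(A) = Σ_ν α_ν·d_ν and tr(A²) = Σ_ν α_ν²·d_ν. -/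
open MeasureTheory Filter

noncomputable section

/-- if `|‖P_ν ψ‖² − d_ν/D| < ε·√(d_ν/(N·D))` for all `ν`, then for every
macro-observable `A = Σ_ν α_ν P_ν` with real coefficients not all zero,
`|⟨ψ, Aψ⟩ − tr A/D| < ε·√(tr(A²)/D)`, where `tr A = Σ_ν α_ν d_ν` and
`tr(A²) = Σ_ν α_ν² d_ν`. -/
theorem macro_observable_bound (D N : ℕ) (hD : 1 ≤ D)
    (V : Fin N → Submodule ℂ (EuclideanSpace ℂ (Fin D)))
    (horth : ∀ ν ν', ν ≠ ν' → Submodule.IsOrtho (V ν) (V ν'))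
    (hspan : (⨆ ν, V ν) = ⊤)
    (dv : Fin N → ℕ) (hdim : ∀ ν, Module.finrank ℂ (V ν) = dv ν)
    (hsum : ∑ ν, dv ν = D)
    (ψ : EuclideanSpace ℂ (Fin D)) (hψ : ‖ψ‖ = 1)
    (ε : ℝ) (hε : 0 < ε)
    (hdev : ∀ ν : Fin N,
      |‖((V ν).orthogonalProjectionOnto ψ : EuclideanSpace ℂ (Fin D))‖ ^ 2 - (dv ν : ℝ) / D|
        < ε * Real.sqrt ((dv ν : ℝ) / (N * D)))
    (a : Fin N → ℝ) (ha : a ≠ 0) :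
    ‖(inner ℂ ψ
        ((∑ ν : Fin N, (a ν : ℂ) •
          ((V ν).subtypeL.comp ((V ν).orthogonalProjectionOnto))) ψ) : ℂ)
      - (((∑ ν : Fin N, a ν * dv ν) / D : ℝ) : ℂ)‖
    < ε * Real.sqrt ((∑ ν : Fin N, (a ν) ^ 2 * dv ν) / D) := by
  obtain ⟨ν₀, hν₀⟩ := Function.ne_iff.mp ha
  have hN : 0 < (N : ℝ) := by exact_mod_cast Fin.pos ν₀
  have hDpos : 0 < (D : ℝ) := by exact_mod_cast hD
  set q : Fin N → ℝ :=
    fun ν => ‖((V ν).orthogonalProjectionOnto ψ : EuclideanSpace ℂ (Fin D))‖ ^ 2 with hq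
  -- step 1: expectation value is the real sum Σ a ν q ν
  have hP : ∀ ν : Fin N,
      (inner ℂ ψ (((V ν).subtypeL.comp ((V ν).orthogonalProjectionOnto)) ψ) : ℂ) = ((q ν : ℝ) : ℂ) := by
    intro ν
    set x : EuclideanSpace ℂ (Fin D) := ((V ν).orthogonalProjectionOnto ψ : EuclideanSpace ℂ (Fin D))
    have h : (((V ν).subtypeL.comp ((V ν).orthogonalProjectionOnto)) ψ) = x := rfl
    have h0 : (inner ℂ (ψ - x) x : ℂ) = 0 :=
      Submodule.starProjection_inner_eq_zero (K := V ν) ψ x ((V ν).orthogonalProjectionOnto ψ).2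
    have h1 : (inner ℂ ψ x : ℂ) = inner ℂ x x := by
      have := inner_sub_left (𝕜 := ℂ) ψ x x
      rw [h0] at this
      linear_combination -this
    rw [h, h1, inner_self_eq_norm_sq_to_K, hq]
    push_cast
    rfl
  have hexp : (inner ℂ ψ
        ((∑ ν : Fin N, (a ν : ℂ) •
          ((V ν).subtypeL.comp ((V ν).orthogonalProjectionOnto))) ψ) : ℂ)
      = ((∑ ν : Fin N, a ν * q ν : ℝ) : ℂ) := by
    rw [ContinuousLinearMap.sum_apply, inner_sum, Complex.ofReal_sum]
    refine Finset.sum_congr rfl fun ν _ => ?_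
    rw [ContinuousLinearMap.smul_apply, inner_smul_right, hP ν, Complex.ofReal_mul]
  rw [hexp, ← Complex.ofReal_sub, Complex.norm_real, Real.norm_eq_abs]
  -- step 2: real estimate
  have hstep : |∑ ν : Fin N, a ν * q ν - (∑ ν : Fin N, a ν * dv ν) / D|
      = |∑ ν : Fin N, a ν * (q ν - dv ν / D)| := by
    rw [Finset.sum_div]
    congr 1
    rw [← Finset.sum_sub_distrib]
    exact Finset.sum_congr rfl fun ν _ => by ring
  rw [hstep]
  have h2 : |∑ ν : Fin N, a ν * (q ν - dv ν / D)|
      ≤ ∑ ν : Fin N, |a ν| * |q ν - dv ν / D| := by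
    refine (Finset.abs_sum_le_sum_abs _ _).trans_eq ?_
    exact Finset.sum_congr rfl fun ν _ => abs_mul _ _
  have h3 : ∑ ν : Fin N, |a ν| * |q ν - dv ν / D|
      < ∑ ν : Fin N, |a ν| * (ε * Real.sqrt ((dv ν : ℝ) / (N * D))) := by
    refine Finset.sum_lt_sum (fun ν _ => ?_) ⟨ν₀, Finset.mem_univ _, ?_⟩
    · exact mul_le_mul_of_nonneg_left (hdev ν).le (abs_nonneg _)
    · exact mul_lt_mul_of_pos_left (hdev ν₀) (abs_pos.mpr hν₀)
  -- step 3: Cauchy–Schwarz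
  have hCS : ∑ ν : Fin N, |a ν| * (ε * Real.sqrt ((dv ν : ℝ) / (N * D)))
      ≤ ε * Real.sqrt ((∑ ν : Fin N, (a ν) ^ 2 * dv ν) / D) := by
    have key := Real.sum_mul_le_sqrt_mul_sqrt Finset.univ
      (fun ν : Fin N => |a ν| * Real.sqrt ((dv ν : ℝ) / D))
      (fun _ : Fin N => Real.sqrt (1 / N))
    have hL : ∑ ν : Fin N, (|a ν| * Real.sqrt ((dv ν : ℝ) / D)) * Real.sqrt (1 / N)
        = ∑ ν : Fin N, |a ν| * Real.sqrt ((dv ν : ℝ) / (N * D)) := by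
      refine Finset.sum_congr rfl fun ν _ => ?_
      have harg : (dv ν : ℝ) / D * (1 / N) = (dv ν : ℝ) / (N * D) := by
        rw [div_mul_div_comm, mul_one, mul_comm (D : ℝ) (N : ℝ)]
      rw [mul_assoc, ← Real.sqrt_mul (by positivity), harg]
    have hR1 : ∑ ν : Fin N, (|a ν| * Real.sqrt ((dv ν : ℝ) / D)) ^ 2
        = (∑ ν : Fin N, (a ν) ^ 2 * dv ν) / D := by
      rw [Finset.sum_div]
      refine Finset.sum_congr rfl fun ν _ => ?_
      rw [mul_pow, sq_abs, Real.sq_sqrt (by positivity)]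
      ring
    have hR2 : ∑ _ν : Fin N, (Real.sqrt (1 / (N : ℝ))) ^ 2 = 1 := by
      rw [Finset.sum_const, Real.sq_sqrt (by positivity), Finset.card_univ, Fintype.card_fin,
        nsmul_eq_mul]
      field_simp
    rw [hL, hR1, hR2, Real.sqrt_one, mul_one] at key
    calc ∑ ν : Fin N, |a ν| * (ε * Real.sqrt ((dv ν : ℝ) / (N * D)))
        = ε * ∑ ν : Fin N, |a ν| * Real.sqrt ((dv ν : ℝ) / (N * D)) := by
          rw [Finset.mul_sum]; exact Finset.sum_congr rfl fun ν _ => by ring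
      _ ≤ ε * Real.sqrt ((∑ ν : Fin N, (a ν) ^ 2 * dv ν) / D) :=
          mul_le_mul_of_nonneg_left key hε.le
  calc |∑ ν : Fin N, a ν * (q ν - dv ν / D)| ≤ _ := h2
    _ < _ := h3
    _ ≤ _ := hCS
end
end

section
/- Fix a unit vector ψ ∈ ℋ and a subspace S₀ of ℋ of dimension d (1 ≤ d ≤ D) with orthogonal projection P₀, and for U ∈ U(D) let P(U) be the orthogonal projection onto U·S₀ (so P(U) = U·P₀·U*). If U is Haar-distributed, then 𝔼[‖P(U)ψ‖²] = d/D and 𝔼[(‖P(U)ψ‖² − d/D)²] = (1/d)·(d/D)²·(D − d)/(D + 1). -/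
open MeasureTheory Filter
open scoped ENNReal NNReal ComplexConjugate

noncomputable section

instance (D : ℕ) : MeasurableSpace (Matrix (Fin D) (Fin D) ℂ) := borel _
instance (D : ℕ) : BorelSpace (Matrix (Fin D) (Fin D) ℂ) := ⟨rfl⟩

namespace Moments17

instance instTG (D : ℕ) : IsTopologicalGroup (Matrix.unitaryGroup (Fin D) ℂ) where
  continuous_mul := by
    apply Continuous.subtype_mk
    exact (continuous_subtype_val.comp continuous_fst).matrix_mul
      (continuous_subtype_val.comp continuous_snd)
  continuous_inv := by
    apply Continuous.subtype_mk
    exact continuous_subtype_val.star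

instance instBS (D : ℕ) : BorelSpace (Matrix.unitaryGroup (Fin D) ℂ) :=
  ⟨(Subtype.borelSpace (Matrix.unitaryGroup (Fin D) ℂ : Set (Matrix (Fin D) (Fin D) ℂ))).measurable_eq⟩

instance instSC (D : ℕ) : SecondCountableTopology (Matrix (Fin D) (Fin D) ℂ) :=
  (inferInstance : SecondCountableTopology (Fin D → Fin D → ℂ))

instance instSC2 (D : ℕ) : SecondCountableTopology (Matrix.unitaryGroup (Fin D) ℂ) :=
  (inferInstance : SecondCountableTopology ((Matrix.unitaryGroup (Fin D) ℂ : Set (Matrix (Fin D) (Fin D) ℂ))))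

instance instCS (D : ℕ) : CompactSpace (Matrix.unitaryGroup (Fin D) ℂ) := by
  suffices h : IsCompact ((Matrix.unitaryGroup (Fin D) ℂ : Set (Matrix (Fin D) (Fin D) ℂ))) from
    isCompact_iff_compactSpace.mp h
  have hclosed : IsClosed ((Matrix.unitaryGroup (Fin D) ℂ : Set (Matrix (Fin D) (Fin D) ℂ))) := by
    have : (Matrix.unitaryGroup (Fin D) ℂ : Set (Matrix (Fin D) (Fin D) ℂ)) =
        ((fun A : Matrix (Fin D) (Fin D) ℂ => star A * A) ⁻¹' {1}) ∩
        ((fun A : Matrix (Fin D) (Fin D) ℂ => A * star A) ⁻¹' {1}) := by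
      ext A
      simp only [Set.mem_inter_iff, Set.mem_preimage, Set.mem_singleton_iff]
      exact ⟨fun h => ⟨h.1, h.2⟩, fun h => ⟨h.1, h.2⟩⟩
    rw [this]
    exact ((isClosed_singleton.preimage
        ((continuous_id.star).matrix_mul continuous_id)).inter
      (isClosed_singleton.preimage (continuous_id.matrix_mul continuous_id.star)))
  have hsub : (Matrix.unitaryGroup (Fin D) ℂ : Set (Matrix (Fin D) (Fin D) ℂ)) ⊆
      Set.pi Set.univ (fun _ : Fin D => Set.pi Set.univ
        fun _ : Fin D => Metric.closedBall (0 : ℂ) 1) := by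
    intro A hA
    intro i _
    intro j _
    simp only [Metric.mem_closedBall, dist_zero_right]
    have h1 : (star A * A) j j = 1 := by
      have := hA.1
      rw [this]
      simp [Matrix.one_apply]
    have h2 : ∑ k, Complex.normSq (A k j) = 1 := by
      have : (star A * A) j j = ∑ k, (starRingEnd ℂ) (A k j) * A k j := by
        simp [Matrix.mul_apply, Matrix.star_eq_conjTranspose, Matrix.conjTranspose_apply]
      rw [this] at h1
      have : (∑ k, ((Complex.normSq (A k j) : ℂ))) = 1 := by
        rw [← h1]
        congr 1
        ext k
        rw [Complex.normSq_eq_conj_mul_self]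
      exact_mod_cast this
    have h3 : Complex.normSq (A i j) ≤ 1 := by
      rw [← h2]
      exact Finset.single_le_sum (f := fun k => Complex.normSq (A k j))
        (fun k _ => Complex.normSq_nonneg _) (Finset.mem_univ i)
    have h4 : ‖A i j‖ ^ 2 ≤ 1 := by
      rwa [← Complex.sq_norm] at h3
    nlinarith [norm_nonneg (A i j)]
  exact IsCompact.of_isClosed_subset
    ((isCompact_univ_pi (fun _ => isCompact_univ_pi fun _ => isCompact_closedBall 0 1)))
    hclosed hsub

lemma right_invariant {D : ℕ} (μ : Measure (Matrix.unitaryGroup (Fin D) ℂ))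
    [μ.IsHaarMeasure] [IsProbabilityMeasure μ] : μ.IsMulRightInvariant := by
  constructor
  intro g
  set ν := μ.map (· * g) with hν
  have hmeas : Measurable (· * g : Matrix.unitaryGroup (Fin D) ℂ → _) :=
    (continuous_mul_right g).measurable
  haveI : ν.IsHaarMeasure := Measure.isHaarMeasure_map_mul_right μ g
  have h2 : ν = Measure.haarScalarFactor ν μ • μ :=
    Measure.isMulLeftInvariant_eq_smul ν μ
  have huniv : ν Set.univ = 1 := by
    rw [hν, Measure.map_apply hmeas MeasurableSet.univ]
    simp
  have hc1 : Measure.haarScalarFactor ν μ = 1 := by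
    have h3 : ν Set.univ = (Measure.haarScalarFactor ν μ : ℝ≥0∞) * μ Set.univ := by
      conv_lhs => rw [h2]
      rw [Measure.smul_apply, ENNReal.smul_def, smul_eq_mul]
    rw [huniv, measure_univ, mul_one] at h3
    exact_mod_cast h3.symm
  rw [h2, hc1, one_smul]



variable {D : ℕ}

lemma toEuc_mul (A B : Matrix (Fin D) (Fin D) ℂ) (x : EuclideanSpace ℂ (Fin D)) :
    Matrix.toEuclideanLin (A * B) x = Matrix.toEuclideanLin A (Matrix.toEuclideanLin B x) := by
  simp [Matrix.toEuclideanLin_apply, Matrix.mulVec_mulVec]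

lemma toEuc_one (x : EuclideanSpace ℂ (Fin D)) :
    Matrix.toEuclideanLin (1 : Matrix (Fin D) (Fin D) ℂ) x = x := by
  simp [Matrix.toEuclideanLin_apply]

lemma inner_toEuc_star (W : Matrix (Fin D) (Fin D) ℂ) (w x : EuclideanSpace ℂ (Fin D)) :
    (inner (𝕜 := ℂ) w (Matrix.toEuclideanLin (star W) x) : ℂ)
      = inner (𝕜 := ℂ) (Matrix.toEuclideanLin W w) x := by
  rw [Matrix.star_eq_conjTranspose, Matrix.toEuclideanLin_conjTranspose_eq_adjoint,
    LinearMap.adjoint_inner_right]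

lemma inner_toEuc_unitary (U : Matrix.unitaryGroup (Fin D) ℂ) (x y : EuclideanSpace ℂ (Fin D)) :
    (inner (𝕜 := ℂ) (Matrix.toEuclideanLin (U : Matrix (Fin D) (Fin D) ℂ) x)
      (Matrix.toEuclideanLin (U : Matrix (Fin D) (Fin D) ℂ) y) : ℂ) = inner (𝕜 := ℂ) x y := by
  rw [← inner_toEuc_star, ← toEuc_mul, (U.2.1 : star (U : Matrix (Fin D) (Fin D) ℂ) * U = 1),
    toEuc_one]

def uIso (U : Matrix.unitaryGroup (Fin D) ℂ) :
    EuclideanSpace ℂ (Fin D) ≃ₗᵢ[ℂ] EuclideanSpace ℂ (Fin D) :=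
  (LinearEquiv.ofLinear (Matrix.toEuclideanLin (U : Matrix (Fin D) (Fin D) ℂ))
    (Matrix.toEuclideanLin ((U⁻¹ : Matrix.unitaryGroup (Fin D) ℂ) : Matrix (Fin D) (Fin D) ℂ))
    (by ext x; simp only [LinearMap.comp_apply, LinearMap.id_apply]
        rw [← toEuc_mul, (by rw [← Matrix.UnitaryGroup.mul_val, mul_inv_cancel,
          Matrix.UnitaryGroup.one_val] : (U : Matrix (Fin D) (Fin D) ℂ) *
          ((U⁻¹ : Matrix.unitaryGroup (Fin D) ℂ) : Matrix (Fin D) (Fin D) ℂ) = 1), toEuc_one])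
    (by ext x; simp only [LinearMap.comp_apply, LinearMap.id_apply]
        rw [← toEuc_mul, (by rw [← Matrix.UnitaryGroup.mul_val, inv_mul_cancel,
          Matrix.UnitaryGroup.one_val] : ((U⁻¹ : Matrix.unitaryGroup (Fin D) ℂ) :
          Matrix (Fin D) (Fin D) ℂ) * (U : Matrix (Fin D) (Fin D) ℂ) = 1), toEuc_one])
    ).isometryOfInner (fun x y => inner_toEuc_unitary U x y)

@[simp] lemma uIso_apply (U : Matrix.unitaryGroup (Fin D) ℂ) (x : EuclideanSpace ℂ (Fin D)) :
    uIso U x = Matrix.toEuclideanLin (U : Matrix (Fin D) (Fin D) ℂ) x := rfl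

@[simp] lemma uIso_symm_apply (U : Matrix.unitaryGroup (Fin D) ℂ) (x : EuclideanSpace ℂ (Fin D)) :
    (uIso U).symm x
      = Matrix.toEuclideanLin ((U⁻¹ : Matrix.unitaryGroup (Fin D) ℂ) : Matrix (Fin D) (Fin D) ℂ) x
      := rfl

lemma proj_map_norm (U : Matrix.unitaryGroup (Fin D) ℂ)
    (S : Submodule ℂ (EuclideanSpace ℂ (Fin D))) (x : EuclideanSpace ℂ (Fin D)) :
    ‖(Submodule.orthogonalProjectionOnto (S.map (Matrix.toEuclideanLin (U : Matrix (Fin D) (Fin D) ℂ))) x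
        : EuclideanSpace ℂ (Fin D))‖
      = ‖(Submodule.orthogonalProjectionOnto S
          (Matrix.toEuclideanLin ((U⁻¹ : Matrix.unitaryGroup (Fin D) ℂ)
            : Matrix (Fin D) (Fin D) ℂ) x) : EuclideanSpace ℂ (Fin D))‖ := by
  have h : (Submodule.orthogonalProjectionOnto (S.map (Matrix.toEuclideanLin (U : Matrix (Fin D) (Fin D) ℂ))) x
      : EuclideanSpace ℂ (Fin D))
      = (uIso U) (Submodule.orthogonalProjectionOnto S
          (Matrix.toEuclideanLin ((U⁻¹ : Matrix.unitaryGroup (Fin D) ℂ)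
            : Matrix (Fin D) (Fin D) ℂ) x)) :=
    Submodule.starProjection_map_apply (uIso U) S x
  rw [h, (uIso U).norm_map]


lemma euclidean_norm_sq {k : ℕ} (z : EuclideanSpace ℂ (Fin k)) :
    ‖z‖ ^ 2 = ∑ i, ‖z i‖ ^ 2 := by
  rw [EuclideanSpace.norm_eq, Real.sq_sqrt]
  positivity

lemma norm_proj_sq {k : ℕ} (S : Submodule ℂ (EuclideanSpace ℂ (Fin D)))
    (b : OrthonormalBasis (Fin k) ℂ S) (x : EuclideanSpace ℂ (Fin D)) :
    ‖(Submodule.orthogonalProjectionOnto S x : EuclideanSpace ℂ (Fin D))‖ ^ 2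
      = ∑ i, ‖(inner (𝕜 := ℂ) ((b i : EuclideanSpace ℂ (Fin D))) x : ℂ)‖ ^ 2 := by
  set y := Submodule.orthogonalProjectionOnto S x with hy
  have hcoe : ‖(y : EuclideanSpace ℂ (Fin D))‖ = ‖y‖ := rfl
  rw [hcoe, ← (b.repr).norm_map y, euclidean_norm_sq]
  congr 1
  ext i
  congr 1
  rw [b.repr_apply_apply]
  rw [Submodule.coe_inner]
  have horth : (inner (𝕜 := ℂ) ((b i : EuclideanSpace ℂ (Fin D)))
      (x - (y : EuclideanSpace ℂ (Fin D))) : ℂ) = 0 := by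
    have h0 : (inner (𝕜 := ℂ) (x - (y : EuclideanSpace ℂ (Fin D))) (b i : EuclideanSpace ℂ (Fin D)) : ℂ) = 0 :=
      Submodule.starProjection_inner_eq_zero (K := S) x (b i : EuclideanSpace ℂ (Fin D)) (b i).2
    rw [← inner_conj_symm, h0, map_zero]
  rw [inner_sub_right, sub_eq_zero] at horth
  rw [horth]




variable {D : ℕ}

lemma exists_unitary_of_onb (b : OrthonormalBasis (Fin D) ℂ (EuclideanSpace ℂ (Fin D))) :
    ∃ W : Matrix.unitaryGroup (Fin D) ℂ, ∀ i,
      Matrix.toEuclideanLin (W : Matrix (Fin D) (Fin D) ℂ) (EuclideanSpace.single i 1) = b i := by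
  refine ⟨⟨(EuclideanSpace.basisFun (Fin D) ℂ).toBasis.toMatrix ⇑b,
    OrthonormalBasis.toMatrix_orthonormalBasis_mem_unitary _ _⟩, ?_⟩
  intro i
  ext j
  rw [Matrix.toEuclideanLin_apply]
  rw [PiLp.ofLp_single]
  rw [Matrix.mulVec_single]
  simp only [mul_one]
  simp only [MulOpposite.op_one, one_smul, Pi.smul_apply, Matrix.col_apply, Module.Basis.toMatrix_apply]
  simp

lemma exists_onb_fixing_one (hD : 0 < D) (w : EuclideanSpace ℂ (Fin D)) (hw : ‖w‖ = 1) :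
    ∃ b : OrthonormalBasis (Fin D) ℂ (EuclideanSpace ℂ (Fin D)), b ⟨0, hD⟩ = w := by
  have hcard : Module.finrank ℂ (EuclideanSpace ℂ (Fin D)) = Fintype.card (Fin D) := by
    simp [finrank_euclideanSpace]
  have horth : Orthonormal ℂ (Set.restrict {(⟨0, hD⟩ : Fin D)} (fun _ => w)) := by
    constructor
    · intro i; exact hw
    · intro i j hij
      exact absurd (Subtype.ext ((i.2.trans j.2.symm : (i : Fin D) = j))) hij
  obtain ⟨b, hb⟩ := horth.exists_orthonormalBasis_extension_of_card_eq hcard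
  exact ⟨b, hb _ rfl⟩

lemma exists_onb_fixing_two (hD2 : 2 ≤ D) (w₀ w₁ : EuclideanSpace ℂ (Fin D))
    (hw₀ : ‖w₀‖ = 1) (hw₁ : ‖w₁‖ = 1) (horth : (inner (𝕜 := ℂ) w₀ w₁ : ℂ) = 0) :
    ∃ b : OrthonormalBasis (Fin D) ℂ (EuclideanSpace ℂ (Fin D)),
      b ⟨0, Nat.lt_of_lt_of_le Nat.zero_lt_two hD2⟩ = w₀ ∧ b ⟨1, Nat.lt_of_lt_of_le Nat.one_lt_two hD2⟩ = w₁ := by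
  have hcard : Module.finrank ℂ (EuclideanSpace ℂ (Fin D)) = Fintype.card (Fin D) := by
    simp [finrank_euclideanSpace]
  set i0 : Fin D := ⟨0, Nat.lt_of_lt_of_le Nat.zero_lt_two hD2⟩
  set i1 : Fin D := ⟨1, Nat.lt_of_lt_of_le Nat.one_lt_two hD2⟩
  have hne : i0 ≠ i1 := by simp [i0, i1, Fin.ext_iff]
  set v : Fin D → EuclideanSpace ℂ (Fin D) := fun i => if i = i0 then w₀ else w₁ with hv
  have hv0 : v i0 = w₀ := by simp [v]
  have hv1 : v i1 = w₁ := by simp [v, hne.symm]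
  have horth' : Orthonormal ℂ (Set.restrict {i0, i1} v) := by
    constructor
    · rintro ⟨i, hi⟩
      rcases hi with h | h
      · simp only [Set.restrict_apply, h, hv0]; exact hw₀
      · show ‖v i‖ = 1
        rw [show i = i1 from h, hv1]; exact hw₁
    · rintro ⟨i, hi⟩ ⟨j, hj⟩ hij
      have hij' : i ≠ j := fun h => hij (Subtype.ext h)
      show inner (𝕜 := ℂ) (v i) (v j) = 0
      rcases hi with h | h <;> rcases hj with h' | h'
      · exact absurd (h.trans h'.symm) hij'
      · rw [h, show j = i1 from h', hv0, hv1]; exact horth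
      · rw [show i = i1 from h, h', hv0, hv1]
        rw [← inner_conj_symm, horth, map_zero]
      · exact absurd ((show i = i1 from h).trans (show j = i1 from h').symm) hij'
  obtain ⟨b, hb⟩ := horth'.exists_orthonormalBasis_extension_of_card_eq hcard
  refine ⟨b, ?_, ?_⟩
  · rw [hb i0 (by simp), hv0]
  · rw [hb i1 (by simp), hv1]



section Core

variable {D : ℕ}

def vv (ψ : EuclideanSpace ℂ (Fin D)) (U : Matrix.unitaryGroup (Fin D) ℂ) :
    EuclideanSpace ℂ (Fin D) :=
  Matrix.toEuclideanLin ((U⁻¹ : Matrix.unitaryGroup (Fin D) ℂ) : Matrix (Fin D) (Fin D) ℂ) ψ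

variable (ψ : EuclideanSpace ℂ (Fin D))

lemma vv_mul (U W : Matrix.unitaryGroup (Fin D) ℂ) :
    vv ψ (U * W) = Matrix.toEuclideanLin
      ((W⁻¹ : Matrix.unitaryGroup (Fin D) ℂ) : Matrix (Fin D) (Fin D) ℂ) (vv ψ U) := by
  unfold vv
  rw [mul_inv_rev, Matrix.UnitaryGroup.mul_val, toEuc_mul]

lemma vv_norm (hψ : ‖ψ‖ = 1) (U : Matrix.unitaryGroup (Fin D) ℂ) : ‖vv ψ U‖ = 1 := by
  unfold vv
  rw [← uIso_apply, (uIso _).norm_map, hψ]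

lemma vv_continuous : Continuous (vv ψ) := by
  have h : vv ψ = fun U : Matrix.unitaryGroup (Fin D) ℂ =>
      (WithLp.equiv 2 (Fin D → ℂ)).symm
        ((star (U : Matrix (Fin D) (Fin D) ℂ)).mulVec ((WithLp.equiv 2 (Fin D → ℂ)) ψ)) := rfl
  rw [h]
  exact (PiLp.continuous_toLp 2 (fun _ : Fin D => ℂ)).comp
    ((continuous_subtype_val.star).matrix_mulVec continuous_const)

def AA (ψ w : EuclideanSpace ℂ (Fin D)) (U : Matrix.unitaryGroup (Fin D) ℂ) : ℝ :=
  ‖(inner (𝕜 := ℂ) w (vv ψ U) : ℂ)‖ ^ 2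

lemma AA_continuous (w : EuclideanSpace ℂ (Fin D)) : Continuous (AA ψ w) :=
  ((continuous_const.inner (vv_continuous ψ)).norm).pow 2

variable (μ : Measure (Matrix.unitaryGroup (Fin D) ℂ)) [μ.IsHaarMeasure] [IsProbabilityMeasure μ]

lemma cont_integrable {f : Matrix.unitaryGroup (Fin D) ℂ → ℝ} (hf : Continuous f) :
    Integrable f μ :=
  hf.integrable_of_hasCompactSupport (HasCompactSupport.of_compactSpace f)

lemma AA_integrable (w : EuclideanSpace ℂ (Fin D)) : Integrable (AA ψ w) μ :=
  cont_integrable μ (AA_continuous ψ w)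

lemma AA_mul_integrable (w w' : EuclideanSpace ℂ (Fin D)) :
    Integrable (fun U => AA ψ w U * AA ψ w' U) μ :=
  cont_integrable μ ((AA_continuous ψ w).mul (AA_continuous ψ w'))

lemma transport1 (W : Matrix.unitaryGroup (Fin D) ℂ) (w : EuclideanSpace ℂ (Fin D)) :
    ∫ U, AA ψ (Matrix.toEuclideanLin (W : Matrix (Fin D) (Fin D) ℂ) w) U ∂μ
      = ∫ U, AA ψ w U ∂μ := by
  haveI := right_invariant μ
  rw [← integral_mul_right_eq_self (μ := μ) (fun U => AA ψ w U) W]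
  congr 1
  funext U
  show AA ψ _ U = AA ψ w (U * W)
  unfold AA
  rw [vv_mul, show ((W⁻¹ : Matrix.unitaryGroup (Fin D) ℂ) : Matrix (Fin D) (Fin D) ℂ)
    = star (W : Matrix (Fin D) (Fin D) ℂ) from rfl, inner_toEuc_star]

lemma transport2 (W : Matrix.unitaryGroup (Fin D) ℂ) (w w' : EuclideanSpace ℂ (Fin D)) :
    ∫ U, AA ψ (Matrix.toEuclideanLin (W : Matrix (Fin D) (Fin D) ℂ) w) U
        * AA ψ (Matrix.toEuclideanLin (W : Matrix (Fin D) (Fin D) ℂ) w') U ∂μ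
      = ∫ U, AA ψ w U * AA ψ w' U ∂μ := by
  haveI := right_invariant μ
  rw [← integral_mul_right_eq_self (μ := μ) (fun U => AA ψ w U * AA ψ w' U) W]
  congr 1
  funext U
  show AA ψ _ U * AA ψ _ U = AA ψ w (U * W) * AA ψ w' (U * W)
  unfold AA
  rw [vv_mul, show ((W⁻¹ : Matrix.unitaryGroup (Fin D) ℂ) : Matrix (Fin D) (Fin D) ℂ)
    = star (W : Matrix (Fin D) (Fin D) ℂ) from rfl, inner_toEuc_star, inner_toEuc_star]

lemma int_AA_eq (hD : 0 < D) (w : EuclideanSpace ℂ (Fin D)) (hw : ‖w‖ = 1) :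
    ∫ U, AA ψ w U ∂μ = ∫ U, AA ψ (EuclideanSpace.single (⟨0, hD⟩ : Fin D) 1) U ∂μ := by
  obtain ⟨b, hb⟩ := exists_onb_fixing_one hD w hw
  obtain ⟨W, hW⟩ := exists_unitary_of_onb b
  calc ∫ U, AA ψ w U ∂μ
      = ∫ U, AA ψ (Matrix.toEuclideanLin (W : Matrix (Fin D) (Fin D) ℂ)
          (EuclideanSpace.single (⟨0, hD⟩ : Fin D) 1)) U ∂μ := by rw [hW _, hb]
    _ = _ := transport1 ψ μ W _

lemma int_AA_mul_eq_diag (hD : 0 < D) (w : EuclideanSpace ℂ (Fin D)) (hw : ‖w‖ = 1) :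
    ∫ U, AA ψ w U * AA ψ w U ∂μ
      = ∫ U, AA ψ (EuclideanSpace.single (⟨0, hD⟩ : Fin D) 1) U
          * AA ψ (EuclideanSpace.single (⟨0, hD⟩ : Fin D) 1) U ∂μ := by
  obtain ⟨b, hb⟩ := exists_onb_fixing_one hD w hw
  obtain ⟨W, hW⟩ := exists_unitary_of_onb b
  calc ∫ U, AA ψ w U * AA ψ w U ∂μ
      = ∫ U, AA ψ (Matrix.toEuclideanLin (W : Matrix (Fin D) (Fin D) ℂ)
            (EuclideanSpace.single (⟨0, hD⟩ : Fin D) 1)) U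
          * AA ψ (Matrix.toEuclideanLin (W : Matrix (Fin D) (Fin D) ℂ)
            (EuclideanSpace.single (⟨0, hD⟩ : Fin D) 1)) U ∂μ := by rw [hW _, hb]
    _ = _ := transport2 ψ μ W _ _

lemma int_AA_mul_eq_offdiag (hD2 : 2 ≤ D) (w w' : EuclideanSpace ℂ (Fin D))
    (hw : ‖w‖ = 1) (hw' : ‖w'‖ = 1) (horth : (inner (𝕜 := ℂ) w w' : ℂ) = 0) :
    ∫ U, AA ψ w U * AA ψ w' U ∂μ
      = ∫ U, AA ψ (EuclideanSpace.single (⟨0, Nat.lt_of_lt_of_le Nat.zero_lt_two hD2⟩ : Fin D) 1) U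
          * AA ψ (EuclideanSpace.single (⟨1, Nat.lt_of_lt_of_le Nat.one_lt_two hD2⟩ : Fin D) 1) U ∂μ := by
  obtain ⟨b, hb0, hb1⟩ := exists_onb_fixing_two hD2 w w' hw hw' horth
  obtain ⟨W, hW⟩ := exists_unitary_of_onb b
  calc ∫ U, AA ψ w U * AA ψ w' U ∂μ
      = ∫ U, AA ψ (Matrix.toEuclideanLin (W : Matrix (Fin D) (Fin D) ℂ)
            (EuclideanSpace.single (⟨0, Nat.lt_of_lt_of_le Nat.zero_lt_two hD2⟩ : Fin D) 1)) U
          * AA ψ (Matrix.toEuclideanLin (W : Matrix (Fin D) (Fin D) ℂ)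
            (EuclideanSpace.single (⟨1, Nat.lt_of_lt_of_le Nat.one_lt_two hD2⟩ : Fin D) 1)) U ∂μ := by
            rw [hW _, hW _, hb0, hb1]
    _ = _ := transport2 ψ μ W _ _

lemma AA_single (U : Matrix.unitaryGroup (Fin D) ℂ) (i : Fin D) :
    AA ψ (EuclideanSpace.single i 1) U = ‖vv ψ U i‖ ^ 2 := by
  unfold AA
  rw [show ((1 : ℂ)) = ((1 : ℂ) : ℂ) from rfl, EuclideanSpace.inner_single_left]
  simp

lemma sum_AA_single (hψ : ‖ψ‖ = 1) (U : Matrix.unitaryGroup (Fin D) ℂ) :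
    ∑ i, AA ψ (EuclideanSpace.single i 1) U = 1 := by
  simp_rw [AA_single]
  rw [← euclidean_norm_sq (vv ψ U), vv_norm ψ hψ U, one_pow]


lemma int_const_one : ∫ (_ : Matrix.unitaryGroup (Fin D) ℂ), (1:ℝ) ∂μ = 1 := by
  simp

lemma a_val (hD : 0 < D) (hψ : ‖ψ‖ = 1) :
    ∫ U, AA ψ (EuclideanSpace.single (⟨0, hD⟩ : Fin D) 1) U ∂μ = 1 / D := by
  have h2 : ∀ i : Fin D, ∫ U, AA ψ (EuclideanSpace.single i 1) U ∂μ
      = ∫ U, AA ψ (EuclideanSpace.single (⟨0, hD⟩ : Fin D) 1) U ∂μ := by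
    intro i
    exact int_AA_eq ψ μ hD _ (by simp)
  have h1 : ∑ i : Fin D, ∫ U, AA ψ (EuclideanSpace.single i 1) U ∂μ = 1 := by
    rw [← integral_finset_sum _ (fun i _ => AA_integrable ψ μ _)]
    simp_rw [sum_AA_single ψ hψ]
    simp
  rw [Finset.sum_congr rfl (fun i _ => h2 i), Finset.sum_const, Finset.card_univ,
    Fintype.card_fin, nsmul_eq_mul] at h1
  have hD' : (D : ℝ) ≠ 0 := by positivity
  field_simp at h1 ⊢
  linarith

lemma norm_one_of_inner_self_one {u : EuclideanSpace ℂ (Fin D)}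
    (h : (inner (𝕜 := ℂ) u u : ℂ) = 1) : ‖u‖ = 1 := by
  have h2 : ‖u‖ ^ 2 = 1 := by
    rw [← inner_self_eq_norm_sq (𝕜 := ℂ) u, h]
    simp
  nlinarith [norm_nonneg u]

lemma two_vec_inner (i j : Fin D) (α β : ℂ) (z : EuclideanSpace ℂ (Fin D)) :
    (inner (𝕜 := ℂ) (α • EuclideanSpace.single i 1 + β • EuclideanSpace.single j 1) z : ℂ)
      = conj α * z i + conj β * z j := by
  rw [inner_add_left, inner_smul_left, inner_smul_left]
  rw [show ((1:ℂ)) = ((1:ℂ) : ℂ) from rfl, EuclideanSpace.inner_single_left,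
    EuclideanSpace.inner_single_left]
  simp

lemma two_vec_apply (i j : Fin D) (hij : i ≠ j) (α β : ℂ) :
    ((α • EuclideanSpace.single i 1 + β • EuclideanSpace.single j 1 :
        EuclideanSpace ℂ (Fin D)) i = α)
    ∧ ((α • EuclideanSpace.single i 1 + β • EuclideanSpace.single j 1 :
        EuclideanSpace ℂ (Fin D)) j = β) := by
  constructor
  · simp [EuclideanSpace.single_apply, hij.symm]
  · simp [EuclideanSpace.single_apply, hij]

lemma two_vec_inner_two_vec (i j : Fin D) (hij : i ≠ j) (α β α' β' : ℂ) :
    (inner (𝕜 := ℂ) (α • EuclideanSpace.single i 1 + β • EuclideanSpace.single j 1)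
      ((α' • EuclideanSpace.single i 1 + β' • EuclideanSpace.single j 1 :
        EuclideanSpace ℂ (Fin D))) : ℂ)
      = conj α * α' + conj β * β' := by
  rw [two_vec_inner, (two_vec_apply i j hij α' β').1, (two_vec_apply i j hij α' β').2]

lemma quad_complex (x y : ℂ) (s : ℂ) (hs : s * s = 1/2) (hsr : conj s = s) :
    ‖s*(x+y)‖^2 * ‖s*(x-y)‖^2 + ‖s*(x - Complex.I*y)‖^2 * ‖s*(x + Complex.I*y)‖^2
      = (‖x‖^2*‖x‖^2 + ‖y‖^2*‖y‖^2)/2 := by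
  have hn : ∀ w : ℂ, ‖w‖^2 = Complex.normSq w := fun w => by
    rw [Complex.sq_norm]
  have hs' : Complex.normSq s = 1/2 := by
    have h := Complex.normSq_eq_conj_mul_self (z := s)
    rw [hsr, hs] at h
    have h2 : ((Complex.normSq s : ℝ) : ℂ) = ((1/2 : ℝ) : ℂ) := by rw [h]; norm_num
    exact_mod_cast h2
  simp only [hn, Complex.normSq_mul, hs']
  simp only [Complex.normSq_apply, Complex.add_re, Complex.add_im, Complex.sub_re,
    Complex.sub_im, Complex.mul_re, Complex.mul_im, Complex.I_re, Complex.I_im]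
  ring

lemma bb_eq_2cc (hD2 : 2 ≤ D) (hψ : ‖ψ‖ = 1) :
    ∫ U, AA ψ (EuclideanSpace.single (⟨0, Nat.lt_of_lt_of_le Nat.zero_lt_two hD2⟩ : Fin D) 1) U
        * AA ψ (EuclideanSpace.single (⟨0, Nat.lt_of_lt_of_le Nat.zero_lt_two hD2⟩ : Fin D) 1) U ∂μ
    = 2 * ∫ U, AA ψ (EuclideanSpace.single (⟨0, Nat.lt_of_lt_of_le Nat.zero_lt_two hD2⟩ : Fin D) 1) U
        * AA ψ (EuclideanSpace.single (⟨1, Nat.lt_of_lt_of_le Nat.one_lt_two hD2⟩ : Fin D) 1) U ∂μ := by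
  set i0 : Fin D := ⟨0, Nat.lt_of_lt_of_le Nat.zero_lt_two hD2⟩
  set i1 : Fin D := ⟨1, Nat.lt_of_lt_of_le Nat.one_lt_two hD2⟩
  have hij : i0 ≠ i1 := by simp [i0, i1, Fin.ext_iff]
  set s : ℂ := (((Real.sqrt 2)⁻¹ : ℝ) : ℂ) with hsdef
  have hs : s * s = 1/2 := by
    rw [hsdef]
    norm_cast
    rw [← mul_inv, Real.mul_self_sqrt (by norm_num)]
    norm_num
  have hsr : conj s = s := Complex.conj_ofReal _
  set u1 : EuclideanSpace ℂ (Fin D) :=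
    s • EuclideanSpace.single i0 1 + s • EuclideanSpace.single i1 1 with hu1
  set u2 : EuclideanSpace ℂ (Fin D) :=
    s • EuclideanSpace.single i0 1 + (-s) • EuclideanSpace.single i1 1 with hu2
  set u3 : EuclideanSpace ℂ (Fin D) :=
    s • EuclideanSpace.single i0 1 + (s * Complex.I) • EuclideanSpace.single i1 1 with hu3
  set u4 : EuclideanSpace ℂ (Fin D) :=
    s • EuclideanSpace.single i0 1 + (-(s * Complex.I)) • EuclideanSpace.single i1 1 with hu4
  -- norms and orthogonality
  have hIconj : conj (s * Complex.I) = -(s * Complex.I) := by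
    rw [map_mul, hsr, Complex.conj_I]; ring
  have hnu1 : ‖u1‖ = 1 := norm_one_of_inner_self_one (by
    rw [hu1, two_vec_inner_two_vec i0 i1 hij, hsr]; rw [hs]; norm_num)
  have hnu2 : ‖u2‖ = 1 := norm_one_of_inner_self_one (by
    rw [hu2, two_vec_inner_two_vec i0 i1 hij, hsr, map_neg, hsr]
    have : -s * -s = s * s := by ring
    rw [this, hs]; norm_num)
  have hnu3 : ‖u3‖ = 1 := norm_one_of_inner_self_one (by
    rw [hu3, two_vec_inner_two_vec i0 i1 hij, hsr, hIconj]
    have : -(s * Complex.I) * (s * Complex.I) = s * s * (-(Complex.I * Complex.I)) := by ring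
    rw [this, Complex.I_mul_I, hs]; norm_num)
  have hnu4 : ‖u4‖ = 1 := norm_one_of_inner_self_one (by
    rw [hu4, two_vec_inner_two_vec i0 i1 hij, hsr, map_neg, hIconj]
    have : - -(s * Complex.I) * -(s * Complex.I) = s * s * (-(Complex.I * Complex.I)) := by ring
    rw [this, Complex.I_mul_I, hs]; norm_num)
  have ho12 : (inner (𝕜 := ℂ) u1 u2 : ℂ) = 0 := by
    rw [hu1, hu2, two_vec_inner_two_vec i0 i1 hij, hsr]; ring
  have ho34 : (inner (𝕜 := ℂ) u3 u4 : ℂ) = 0 := by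
    rw [hu3, hu4, two_vec_inner_two_vec i0 i1 hij, hsr, hIconj]
    have : -(s * Complex.I) * -(s * Complex.I) = s * s * (Complex.I * Complex.I) := by ring
    rw [this, Complex.I_mul_I, hs]; ring
  -- pointwise identity
  have hpoint : ∀ U, AA ψ u1 U * AA ψ u2 U + AA ψ u3 U * AA ψ u4 U
      = (AA ψ (EuclideanSpace.single i0 1) U * AA ψ (EuclideanSpace.single i0 1) U
        + AA ψ (EuclideanSpace.single i1 1) U * AA ψ (EuclideanSpace.single i1 1) U)/2 := by
    intro U
    set z := vv ψ U
    have e1 : (inner (𝕜 := ℂ) u1 z : ℂ) = s * (z i0 + z i1) := by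
      rw [hu1, two_vec_inner, hsr]; ring
    have e2 : (inner (𝕜 := ℂ) u2 z : ℂ) = s * (z i0 - z i1) := by
      rw [hu2, two_vec_inner, hsr, map_neg, hsr]; ring
    have e3 : (inner (𝕜 := ℂ) u3 z : ℂ) = s * (z i0 - Complex.I * z i1) := by
      rw [hu3, two_vec_inner, hsr, hIconj]; ring
    have e4 : (inner (𝕜 := ℂ) u4 z : ℂ) = s * (z i0 + Complex.I * z i1) := by
      rw [hu4, two_vec_inner, hsr, map_neg, hIconj]; ring
    unfold AA
    rw [e1, e2, e3, e4]
    rw [show ((1:ℂ)) = ((1:ℂ) : ℂ) from rfl, EuclideanSpace.inner_single_left,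
      EuclideanSpace.inner_single_left]
    simp only [map_one, one_mul]
    exact quad_complex (z i0) (z i1) s hs hsr
  -- integrate
  have hInt : ∫ U, (AA ψ u1 U * AA ψ u2 U + AA ψ u3 U * AA ψ u4 U) ∂μ
      = ∫ U, (AA ψ (EuclideanSpace.single i0 1) U * AA ψ (EuclideanSpace.single i0 1) U
        + AA ψ (EuclideanSpace.single i1 1) U * AA ψ (EuclideanSpace.single i1 1) U)/2 ∂μ := by
    congr 1
    funext U
    exact hpoint U
  rw [integral_add (AA_mul_integrable ψ μ _ _) (AA_mul_integrable ψ μ _ _)] at hInt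
  rw [integral_div] at hInt
  rw [integral_add (AA_mul_integrable ψ μ _ _) (AA_mul_integrable ψ μ _ _)] at hInt
  have hc1 : ∫ U, AA ψ u1 U * AA ψ u2 U ∂μ
      = ∫ U, AA ψ (EuclideanSpace.single i0 1) U * AA ψ (EuclideanSpace.single i1 1) U ∂μ :=
    int_AA_mul_eq_offdiag ψ μ hD2 u1 u2 hnu1 hnu2 ho12
  have hc2 : ∫ U, AA ψ u3 U * AA ψ u4 U ∂μ
      = ∫ U, AA ψ (EuclideanSpace.single i0 1) U * AA ψ (EuclideanSpace.single i1 1) U ∂μ :=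
    int_AA_mul_eq_offdiag ψ μ hD2 u3 u4 hnu3 hnu4 ho34
  have hb1 : ∫ U, AA ψ (EuclideanSpace.single i1 1) U * AA ψ (EuclideanSpace.single i1 1) U ∂μ
      = ∫ U, AA ψ (EuclideanSpace.single i0 1) U * AA ψ (EuclideanSpace.single i0 1) U ∂μ := by
    have := int_AA_mul_eq_diag ψ μ (Nat.lt_of_lt_of_le Nat.zero_lt_two hD2)
      (EuclideanSpace.single i1 1) (by simp)
    exact this
  rw [hc1, hc2, hb1] at hInt
  linarith



lemma sum_ite_const (k : ℕ) (b c : ℝ) :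
    (∑ i : Fin k, ∑ j : Fin k, if i = j then b else c) = k*b + ((k:ℝ)^2-k)*c := by
  have hrow : ∀ i : Fin k, (∑ j : Fin k, if i = j then b else c) = k*c + (b - c) := by
    intro i
    have h1 : ∀ j : Fin k, (if i = j then b else c) = c + (if i = j then b - c else 0) := by
      intro j; by_cases h : i = j <;> simp [h]
    simp_rw [h1]
    rw [Finset.sum_add_distrib, Finset.sum_const, Finset.card_univ, Fintype.card_fin,
      Finset.sum_ite_eq, if_pos (Finset.mem_univ i), nsmul_eq_mul]
  simp_rw [hrow]
  rw [Finset.sum_const, Finset.card_univ, Fintype.card_fin, nsmul_eq_mul]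
  ring

lemma singles_orth {i j : Fin D} (h : i ≠ j) :
    (inner (𝕜 := ℂ) (EuclideanSpace.single i (1:ℂ))
      ((EuclideanSpace.single j (1:ℂ) : EuclideanSpace ℂ (Fin D))) : ℂ) = 0 := by
  rw [EuclideanSpace.inner_single_left]
  simp [EuclideanSpace.single_apply, h]

lemma cc_val (hD2 : 2 ≤ D) (hψ : ‖ψ‖ = 1) :
    ∫ U, AA ψ (EuclideanSpace.single (⟨0, Nat.lt_of_lt_of_le Nat.zero_lt_two hD2⟩ : Fin D) 1) U
        * AA ψ (EuclideanSpace.single (⟨1, Nat.lt_of_lt_of_le Nat.one_lt_two hD2⟩ : Fin D) 1) U ∂μ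
      = 1 / ((D:ℝ) * (D+1)) := by
  have hD : 0 < D := Nat.lt_of_lt_of_le Nat.zero_lt_two hD2
  set bb := ∫ U, AA ψ (EuclideanSpace.single (⟨0, hD⟩ : Fin D) 1) U
      * AA ψ (EuclideanSpace.single (⟨0, hD⟩ : Fin D) 1) U ∂μ with hbb
  set cc := ∫ U, AA ψ (EuclideanSpace.single (⟨0, Nat.lt_of_lt_of_le Nat.zero_lt_two hD2⟩ : Fin D) 1) U
      * AA ψ (EuclideanSpace.single (⟨1, Nat.lt_of_lt_of_le Nat.one_lt_two hD2⟩ : Fin D) 1) U ∂μ with hcc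
  have h2 : ∀ i j : Fin D, ∫ U, AA ψ (EuclideanSpace.single i 1) U
      * AA ψ (EuclideanSpace.single j 1) U ∂μ = if i = j then bb else cc := by
    intro i j
    by_cases h : i = j
    · subst h
      rw [if_pos rfl, hbb]
      exact int_AA_mul_eq_diag ψ μ hD (EuclideanSpace.single i 1) (by simp)
    · rw [if_neg h, hcc]
      exact int_AA_mul_eq_offdiag ψ μ hD2 _ _ (by simp) (by simp) (singles_orth h)
  have h1 : ∑ i : Fin D, ∑ j : Fin D, (∫ U, AA ψ (EuclideanSpace.single i 1) U
      * AA ψ (EuclideanSpace.single j 1) U ∂μ) = 1 := by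
    have hswap : ∑ i : Fin D, ∑ j : Fin D, (∫ U, AA ψ (EuclideanSpace.single i 1) U
        * AA ψ (EuclideanSpace.single j 1) U ∂μ)
        = ∫ U, ∑ i : Fin D, ∑ j : Fin D, AA ψ (EuclideanSpace.single i 1) U
            * AA ψ (EuclideanSpace.single j 1) U ∂μ := by
      rw [integral_finset_sum _ (fun i _ => integrable_finset_sum _
        (fun j _ => AA_mul_integrable ψ μ _ _))]
      exact Finset.sum_congr rfl (fun i _ =>
        (integral_finset_sum _ (fun j _ => AA_mul_integrable ψ μ _ _)).symm)
    rw [hswap]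
    have hpt : ∀ U, ∑ i : Fin D, ∑ j : Fin D, AA ψ (EuclideanSpace.single i 1) U
        * AA ψ (EuclideanSpace.single j 1) U = 1 := by
      intro U
      rw [← Finset.sum_mul_sum]
      rw [sum_AA_single ψ hψ]
      norm_num
    simp_rw [hpt]
    simp
  rw [Finset.sum_congr rfl (fun i _ => Finset.sum_congr rfl (fun j _ => h2 i j))] at h1
  rw [sum_ite_const] at h1
  have hb2c : bb = 2 * cc := bb_eq_2cc ψ μ hD2 hψ
  have hDpos : (0:ℝ) < D := by exact_mod_cast hD
  have hkey : cc * ((D:ℝ)^2 + D) = 1 := by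
    rw [hb2c] at h1
    ring_nf at h1 ⊢
    linarith
  have hne : ((D:ℝ)^2 + D) ≠ 0 := by positivity
  field_simp
  have : (D:ℝ) * (D+1) = (D:ℝ)^2 + D := by ring
  rw [mul_assoc, this]
  linarith [mul_comm cc ((D:ℝ)^2 + D)]

lemma bb_val (hD2 : 2 ≤ D) (hψ : ‖ψ‖ = 1) :
    ∫ U, AA ψ (EuclideanSpace.single (⟨0, Nat.lt_of_lt_of_le Nat.zero_lt_two hD2⟩ : Fin D) 1) U
        * AA ψ (EuclideanSpace.single (⟨0, Nat.lt_of_lt_of_le Nat.zero_lt_two hD2⟩ : Fin D) 1) U ∂μ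
      = 2 / ((D:ℝ) * (D+1)) := by
  rw [bb_eq_2cc ψ μ hD2 hψ, cc_val ψ μ hD2 hψ]
  ring

lemma pair_int (hD2 : 2 ≤ D) (hψ : ‖ψ‖ = 1) {k : ℕ} (w : Fin k → EuclideanSpace ℂ (Fin D))
    (hw : Orthonormal ℂ w) (i j : Fin k) :
    ∫ U, AA ψ (w i) U * AA ψ (w j) U ∂μ
      = if i = j then 2/((D:ℝ)*(D+1)) else 1/((D:ℝ)*(D+1)) := by
  have hD : 0 < D := Nat.lt_of_lt_of_le Nat.zero_lt_two hD2
  by_cases h : i = j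
  · subst h
    rw [if_pos rfl, int_AA_mul_eq_diag ψ μ hD (w i) (hw.1 i)]
    have := bb_val ψ μ hD2 hψ
    convert this using 3
  · rw [if_neg h, int_AA_mul_eq_offdiag ψ μ hD2 _ _ (hw.1 i) (hw.1 j) (hw.2 h)]
    exact cc_val ψ μ hD2 hψ

lemma family_first (hD : 0 < D) (hψ : ‖ψ‖ = 1) {k : ℕ}
    (w : Fin k → EuclideanSpace ℂ (Fin D)) (hw : Orthonormal ℂ w) :
    ∫ U, ∑ i, AA ψ (w i) U ∂μ = (k:ℝ) / D := by
  rw [integral_finset_sum _ (fun i _ => AA_integrable ψ μ _)]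
  have h : ∀ i : Fin k, ∫ U, AA ψ (w i) U ∂μ = 1/(D:ℝ) := fun i => by
    rw [int_AA_eq ψ μ hD _ (hw.1 i), a_val ψ μ hD hψ]
  simp_rw [h]
  rw [Finset.sum_const, Finset.card_univ, Fintype.card_fin, nsmul_eq_mul]
  ring

lemma family_second (hD2 : 2 ≤ D) (hψ : ‖ψ‖ = 1) {k : ℕ}
    (w : Fin k → EuclideanSpace ℂ (Fin D)) (hw : Orthonormal ℂ w) :
    ∫ U, (∑ i, AA ψ (w i) U)^2 ∂μ = ((k:ℝ)*(k+1))/((D:ℝ)*(D+1)) := by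
  have hpt : ∀ U, (∑ i, AA ψ (w i) U)^2 = ∑ i, ∑ j, AA ψ (w i) U * AA ψ (w j) U := by
    intro U; rw [sq, Finset.sum_mul_sum]
  have h0 : ∫ U, (∑ i, AA ψ (w i) U)^2 ∂μ
      = ∫ U, ∑ i, ∑ j, AA ψ (w i) U * AA ψ (w j) U ∂μ := by
    congr 1
    funext U
    exact hpt U
  rw [h0, integral_finset_sum _ (fun i _ => integrable_finset_sum _
    (fun j _ => AA_mul_integrable ψ μ _ _))]
  have h1 : ∀ i : Fin k, (∫ U, ∑ j : Fin k, AA ψ (w i) U * AA ψ (w j) U ∂μ)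
      = ∑ j : Fin k, (if i = j then 2/((D:ℝ)*(D+1)) else 1/((D:ℝ)*(D+1))) := by
    intro i
    rw [integral_finset_sum _ (fun j _ => AA_mul_integrable ψ μ _ _)]
    exact Finset.sum_congr rfl (fun j _ => pair_int ψ μ hD2 hψ w hw i j)
  simp_rw [h1]
  rw [sum_ite_const]
  have hDpos : (0:ℝ) < D := by exact_mod_cast Nat.lt_of_lt_of_le Nat.zero_lt_two hD2
  have hne : (D:ℝ)*((D:ℝ)+1) ≠ 0 := by positivity
  field_simp
  ring


end Core

end Moments17

open Moments17 in
/-- 'unitary inversion' moments: for a fixed unit vector `ψ` and a fixed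
`d`-dimensional subspace `S₀`, with `P(U)` the projection onto `U·S₀` and Haar-distributed
`U`, one has `𝔼‖P(U)ψ‖² = d/D` and `𝔼(‖P(U)ψ‖² − d/D)² = (1/d)(d/D)²(D−d)/(D+1)`. -/
theorem moments_random_subspace (D d : ℕ) (hD : 1 ≤ D) (hd : 1 ≤ d) (hdD : d ≤ D)
    (ψ : EuclideanSpace ℂ (Fin D)) (hψ : ‖ψ‖ = 1)
    (S₀ : Submodule ℂ (EuclideanSpace ℂ (Fin D))) (hS₀ : Module.finrank ℂ S₀ = d)
    (μU : Measure (Matrix.unitaryGroup (Fin D) ℂ))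
    (hHaar : μU.IsHaarMeasure) (hProb : IsProbabilityMeasure μU) :
    (∫ U : Matrix.unitaryGroup (Fin D) ℂ,
        ‖(Submodule.orthogonalProjectionOnto
            (Submodule.map (Matrix.toEuclideanLin (U : Matrix (Fin D) (Fin D) ℂ)) S₀)
            ψ : EuclideanSpace ℂ (Fin D))‖ ^ 2 ∂μU
      = (d : ℝ) / D)
    ∧
    (∫ U : Matrix.unitaryGroup (Fin D) ℂ,
        (‖(Submodule.orthogonalProjectionOnto
            (Submodule.map (Matrix.toEuclideanLin (U : Matrix (Fin D) (Fin D) ℂ)) S₀)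
            ψ : EuclideanSpace ℂ (Fin D))‖ ^ 2 - (d : ℝ) / D) ^ 2 ∂μU
      = (1 / (d : ℝ)) * ((d : ℝ) / D) ^ 2 * (((D : ℝ) - d) / ((D : ℝ) + 1))) := by
  haveI := hHaar
  haveI := hProb
  by_cases hD2 : 2 ≤ D
  · -- main case
    have hDpos : 0 < D := hD
    -- orthonormal basis of S₀
    haveI : FiniteDimensional ℂ S₀ := inferInstance
    set b₀ : OrthonormalBasis (Fin d) ℂ S₀ :=
      (stdOrthonormalBasis ℂ S₀).reindex (finCongr (by rw [hS₀])) with hb₀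
    set w : Fin d → EuclideanSpace ℂ (Fin D) := fun i => (b₀ i : EuclideanSpace ℂ (Fin D)) with hwdef
    have hw : Orthonormal ℂ w := by
      rw [orthonormal_iff_ite]
      intro i j
      have := orthonormal_iff_ite.mp b₀.orthonormal i j
      rw [hwdef]
      simpa [Submodule.coe_inner] using this
    have hpt : ∀ U : Matrix.unitaryGroup (Fin D) ℂ,
        ‖(Submodule.orthogonalProjectionOnto
            (Submodule.map (Matrix.toEuclideanLin (U : Matrix (Fin D) (Fin D) ℂ)) S₀)
            ψ : EuclideanSpace ℂ (Fin D))‖ ^ 2 = ∑ i, AA ψ (w i) U := by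
      intro U
      rw [proj_map_norm U S₀ ψ]
      exact norm_proj_sq S₀ b₀ (vv ψ U)
    have hfirst : ∫ U, ‖(Submodule.orthogonalProjectionOnto
        (Submodule.map (Matrix.toEuclideanLin (U : Matrix (Fin D) (Fin D) ℂ)) S₀)
        ψ : EuclideanSpace ℂ (Fin D))‖ ^ 2 ∂μU = (d:ℝ)/D := by
      have h0 : ∫ U, ‖(Submodule.orthogonalProjectionOnto
          (Submodule.map (Matrix.toEuclideanLin (U : Matrix (Fin D) (Fin D) ℂ)) S₀)
          ψ : EuclideanSpace ℂ (Fin D))‖ ^ 2 ∂μU = ∫ U, ∑ i, AA ψ (w i) U ∂μU := by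
        congr 1
        funext U
        exact hpt U
      rw [h0]
      exact family_first ψ μU hDpos hψ w hw
    refine ⟨hfirst, ?_⟩
    have h0 : ∫ U, (‖(Submodule.orthogonalProjectionOnto
        (Submodule.map (Matrix.toEuclideanLin (U : Matrix (Fin D) (Fin D) ℂ)) S₀)
        ψ : EuclideanSpace ℂ (Fin D))‖ ^ 2 - (d : ℝ) / D) ^ 2 ∂μU
        = ∫ U, ((∑ i, AA ψ (w i) U) - (d : ℝ)/D)^2 ∂μU := by
      congr 1
      funext U
      rw [hpt U]
    rw [h0]
    have hXcont : Continuous (fun U => ∑ i, AA ψ (w i) U) := by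
      apply continuous_finset_sum
      intro i _
      exact AA_continuous ψ (w i)
    have hexp : ∀ U : Matrix.unitaryGroup (Fin D) ℂ,
        ((∑ i, AA ψ (w i) U) - (d : ℝ)/D)^2
        = (∑ i, AA ψ (w i) U)^2 - (2*((d:ℝ)/D)) * (∑ i, AA ψ (w i) U) + ((d:ℝ)/D)^2 := by
      intro U; ring
    have h1 : ∫ U, ((∑ i, AA ψ (w i) U) - (d : ℝ)/D)^2 ∂μU
        = ∫ U, ((∑ i, AA ψ (w i) U)^2 - (2*((d:ℝ)/D)) * (∑ i, AA ψ (w i) U)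
            + ((d:ℝ)/D)^2) ∂μU := by
      congr 1
      funext U
      exact hexp U
    rw [h1]
    have hi1 : Integrable (fun U => (∑ i, AA ψ (w i) U)^2) μU :=
      cont_integrable μU (hXcont.pow 2)
    have hi2 : Integrable (fun U => (2*((d:ℝ)/D)) * (∑ i, AA ψ (w i) U)) μU :=
      cont_integrable μU (continuous_const.mul hXcont)
    have hi12 : Integrable (fun U => (∑ i, AA ψ (w i) U)^2
        - (2*((d:ℝ)/D)) * (∑ i, AA ψ (w i) U)) μU := hi1.sub hi2
    rw [integral_add hi12 (integrable_const _), integral_sub hi1 hi2,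
      integral_const, integral_const_mul]
    rw [family_second ψ μU hD2 hψ w hw, family_first ψ μU hDpos hψ w hw]
    have hDr : (0:ℝ) < D := by exact_mod_cast hDpos
    have hdr : (0:ℝ) < d := by exact_mod_cast hd
    have hD1 : (0:ℝ) < (D:ℝ) + 1 := by linarith
    simp only [probReal_univ, measure_univ, ENNReal.toReal_one, smul_eq_mul, one_mul]
    field_simp
    ring
  · -- D = 1
    have hD1 : D = 1 := by omega
    have hd1 : d = 1 := by omega
    have hStop : S₀ = ⊤ := by
      apply Submodule.eq_top_of_finrank_eq
      rw [hS₀, finrank_euclideanSpace_fin, hD1, hd1]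
    have hproj : ∀ U : Matrix.unitaryGroup (Fin D) ℂ,
        (Submodule.orthogonalProjectionOnto
          (Submodule.map (Matrix.toEuclideanLin (U : Matrix (Fin D) (Fin D) ℂ)) S₀) ψ
          : EuclideanSpace ℂ (Fin D)) = ψ := by
      intro U
      have hmap : Submodule.map (Matrix.toEuclideanLin (U : Matrix (Fin D) (Fin D) ℂ)) S₀
          = (⊤ : Submodule ℂ (EuclideanSpace ℂ (Fin D))) := by
        rw [hStop]
        rw [Submodule.map_top]
        rw [LinearMap.range_eq_top]
        exact (uIso U).surjective
      exact Submodule.starProjection_eq_self_iff.mpr (by rw [hmap]; trivial)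
    constructor
    · have h0 : ∫ U, ‖(Submodule.orthogonalProjectionOnto
          (Submodule.map (Matrix.toEuclideanLin (U : Matrix (Fin D) (Fin D) ℂ)) S₀)
          ψ : EuclideanSpace ℂ (Fin D))‖ ^ 2 ∂μU = ∫ _U, (1:ℝ) ∂μU := by
        congr 1
        funext U
        rw [hproj U, hψ]
        norm_num
      rw [h0]
      simp [hD1, hd1]
    · have h0 : ∫ U, (‖(Submodule.orthogonalProjectionOnto
          (Submodule.map (Matrix.toEuclideanLin (U : Matrix (Fin D) (Fin D) ℂ)) S₀)
          ψ : EuclideanSpace ℂ (Fin D))‖ ^ 2 - (d : ℝ) / D) ^ 2 ∂μU = ∫ _U, (0:ℝ) ∂μU := by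
        congr 1
        funext U
        rw [hproj U, hψ, hD1, hd1]
        norm_num
      rw [h0]
      simp [hD1, hd1]
end
end
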